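/- arXiv:2409.20051 — 9 statements merged into one kernel-verified Lean document; each statement's English description precedes it below -/
import Mathlib

section
/- Let σ : Sym⁺⁺(3) → Sym(3) be isotropic (σ(Q B Qᵀ) = Q σ(B) Qᵀ for all Q ∈ O(3) and B ∈ Sym⁺⁺(3)) and Fréchet differentiable at B ∈ Sym⁺⁺(3), with derivative Dσ(B) : Sym(3) → Sym(3). Then for every skew-symmetric 3×3 real matrix Ω one has Ω σ(B) − σ(B) Ω = Dσ(B).(Ω B − B Ω). -/
open Matrix

noncomputable section

abbrev M3 := Matrix (Fin 3) (Fin 3) ℝ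

attribute [local instance] Matrix.frobeniusNormedAddCommGroup Matrix.frobeniusNormedSpace

attribute [local instance] Matrix.frobeniusNormedRing Matrix.frobeniusNormedAlgebra

open NormedSpace

/-- Conjugation by an orthogonal matrix preserves positive definiteness. -/
lemma posDef_conj_orth {Q B : M3} (hQ : Qᵀ * Q = 1) (hB : B.PosDef) :
    (Q * B * Qᵀ).PosDef := by
  have hQQ : Q * Qᵀ = 1 := mul_eq_one_comm.mp hQ
  refine posDef_iff_dotProduct_mulVec.mpr ⟨?_, ?_⟩
  · show (Q * B * Qᵀ)ᴴ = Q * B * Qᵀ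
    have hBt : Bᵀ = B := (by simpa using hB.isHermitian : B.IsSymm)
    simp [Matrix.conjTranspose_mul, Matrix.mul_assoc, hBt]
  · intro x hx
    have hx' : Qᵀ *ᵥ x ≠ 0 := by
      intro h
      apply hx
      have : Q *ᵥ (Qᵀ *ᵥ x) = Q *ᵥ (0 : Fin 3 → ℝ) := by rw [h]
      rwa [Matrix.mulVec_mulVec, hQQ, Matrix.one_mulVec, Matrix.mulVec_zero] at this
    have key := (posDef_iff_dotProduct_mulVec.mp hB).2 (x := Qᵀ *ᵥ x) hx'
    have hvm : x ᵥ* Q = Qᵀ *ᵥ x := (Matrix.mulVec_transpose Q x).symm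
    have : dotProduct (star x) ((Q * B * Qᵀ) *ᵥ x)
        = dotProduct (star (Qᵀ *ᵥ x)) (B *ᵥ (Qᵀ *ᵥ x)) := by
      rw [star_trivial, star_trivial, ← Matrix.mulVec_mulVec, ← Matrix.mulVec_mulVec,
        Matrix.dotProduct_mulVec, hvm]
    rwa [this]

lemma exp_orth (Ω : M3) (hΩ : Ωᵀ = -Ω) (t : ℝ) :
    (exp (t • Ω))ᵀ * exp (t • Ω) = 1 := by
  have h1 : (exp (t • Ω))ᵀ = exp (-(t • Ω)) := by
    rw [← Matrix.exp_transpose, Matrix.transpose_smul, hΩ, smul_neg]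
  rw [h1, ← Matrix.exp_add_of_commute _ _ ((Commute.refl (t • Ω)).neg_left), neg_add_cancel, exp_zero]

/-- For an isotropic map `σ : Sym⁺⁺(3) → Sym(3)` which is Fréchet
differentiable at `B ∈ Sym⁺⁺(3)` with derivative `T`, and any skew-symmetric `Ω`,
one has `Ω σ(B) − σ(B) Ω = Dσ(B).(Ω B − B Ω)`. -/
theorem isotropic_commutator_identity
    (σ : M3 → M3)
    (hmaps : ∀ B : M3, B.PosDef → (σ B).IsSymm)
    (hiso : ∀ (Q B : M3), Qᵀ * Q = 1 → B.PosDef → σ (Q * B * Qᵀ) = Q * σ B * Qᵀ)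
    (B : M3) (hB : B.PosDef)
    (T : M3 →L[ℝ] M3)
    (hT : HasFDerivWithinAt σ T {X : M3 | X.PosDef} B)
    (Ω : M3) (hΩ : Ωᵀ = -Ω) :
    Ω * σ B - σ B * Ω = T (Ω * B - B * Ω) := by
  set Q : ℝ → M3 := fun t => exp (t • Ω) with hQdef
  have hQ0 : Q 0 = 1 := by simp [hQdef, exp_zero]
  have hQorth : ∀ t, (Q t)ᵀ * Q t = 1 := fun t => exp_orth Ω hΩ t
  -- derivative of Q at 0 is Ω
  have hQderiv : HasDerivAt Q Ω 0 := by
    have h := hasDerivAt_exp_smul_const (𝕂 := ℝ) Ω (0 : ℝ)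
    simp only [zero_smul, exp_zero, one_mul] at h; exact h
  -- derivative of Qᵀ at 0 is Ωᵀ = -Ω
  have hQTderiv : HasDerivAt (fun t => (Q t)ᵀ) (-Ω) 0 := by
    have := (Matrix.transposeLinearEquiv (Fin 3) (Fin 3) ℝ ℝ).toLinearMap.toContinuousLinearMap
    -- use that transpose is linear and continuous
    have h : HasDerivAt (fun t => (Q t)ᵀ) (Ωᵀ) 0 := by
      have hlin : IsBoundedLinearMap ℝ (fun A : M3 => Aᵀ) := by
        refine ⟨⟨fun a b => Matrix.transpose_add a b, fun c a => Matrix.transpose_smul c a⟩, ?_⟩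
        obtain ⟨C, hC0, hC⟩ := ((Matrix.transposeLinearEquiv (Fin 3) (Fin 3) ℝ
          ℝ).toLinearMap.toContinuousLinearMap).bound
        exact ⟨C, hC0, fun x => hC x⟩
      exact (hlin.hasFDerivAt.comp_hasDerivAt 0 hQderiv)
    rwa [hΩ] at h
  -- the curve c t = Q t * B * (Q t)ᵀ
  set c : ℝ → M3 := fun t => Q t * B * (Q t)ᵀ with hcdef
  have hc0 : c 0 = B := by simp [hcdef, hQ0]
  have hcpos : ∀ t, (c t).PosDef := fun t => posDef_conj_orth (hQorth t) hB
  have hcderiv : HasDerivAt c (Ω * B - B * Ω) 0 := by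
    have h := ((hQderiv.mul (hasDerivAt_const 0 B)).mul hQTderiv)
    have e : Ω * B * (Q 0)ᵀ + Q 0 * B * -Ω = Ω * B - B * Ω := by
      simp [hQ0, sub_eq_add_neg, Matrix.mul_neg]
    rw [show (Ω * B + Q 0 * 0) = Ω * B by simp] at h
    rw [show ((Q * fun x => B : ℝ → M3) 0) = Q 0 * B from rfl, e] at h; exact h
  -- the curve g t = Q t * σ B * (Q t)ᵀ
  have hgderiv : HasDerivAt (fun t => Q t * σ B * (Q t)ᵀ) (Ω * σ B - σ B * Ω) 0 := by
    have h := ((hQderiv.mul (hasDerivAt_const 0 (σ B))).mul hQTderiv)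
    have e : Ω * σ B * (Q 0)ᵀ + Q 0 * σ B * -Ω = Ω * σ B - σ B * Ω := by
      simp [hQ0, sub_eq_add_neg, Matrix.mul_neg]
    rw [show (Ω * σ B + Q 0 * 0) = Ω * σ B by simp] at h
    rw [show ((Q * fun x => σ B : ℝ → M3) 0) = Q 0 * σ B from rfl, e] at h; exact h
  -- σ ∘ c = g
  have hfun : (σ ∘ c) = fun t => Q t * σ B * (Q t)ᵀ := by
    funext t
    exact hiso (Q t) B (hQorth t) hB
  -- derivative of σ ∘ c at 0 is T (Ω B - B Ω)
  have hcomp : HasDerivAt (σ ∘ c) (T (Ω * B - B * Ω)) 0 := by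
    refine hasDerivWithinAt_univ.mp ?_
    have hTc : HasFDerivWithinAt σ T {X : M3 | X.PosDef} (c 0) := by rwa [hc0]
    exact hTc.comp_hasDerivWithinAt 0 (hcderiv.hasDerivWithinAt)
      (fun t _ => hcpos t)
  rw [hfun] at hcomp
  exact (hcomp.unique hgderiv).symm
end
end

section
/- Let σ : Sym⁺⁺(3) → Sym(3) be isotropic and Fréchet differentiable, let B : ℝ → Sym⁺⁺(3) be differentiable at t₀, and let Ω be a skew-symmetric 3×3 real matrix. Writing B₀ = B(t₀) and B' = (d/dt)B(t)|_{t₀}, the corotational rate of σ along B satisfies the chain rule: (d/dt)[σ(B(t))]|_{t₀} − Ω σ(B₀) + σ(B₀) Ω = Dσ(B₀).(B' − Ω B₀ + B₀ Ω). -/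
open Matrix NormedSpace

noncomputable section

attribute [local instance] Matrix.frobeniusNormedAddCommGroup Matrix.frobeniusNormedSpace

attribute [local instance] Matrix.frobeniusNormedRing Matrix.frobeniusNormedAlgebra

lemma posDef_conj (Q X : M3) (hQ : Qᵀ * Q = 1) (hX : X.PosDef) :
    (Q * X * Qᵀ).PosDef := by
  have hQQ : Q * Qᵀ = 1 := by
    rwa [mul_eq_one_comm] at hQ
  refine Matrix.PosDef.of_dotProduct_mulVec_pos ?_ ?_
  · show (Q * X * Qᵀ)ᴴ = Q * X * Qᵀ
    rw [Matrix.conjTranspose_eq_transpose_of_trivial, Matrix.transpose_mul,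
      Matrix.transpose_mul, Matrix.transpose_transpose]
    have hXs : Xᵀ = X := by
      have := hX.isHermitian
      rwa [Matrix.IsHermitian, Matrix.conjTranspose_eq_transpose_of_trivial] at this
    rw [hXs, Matrix.mul_assoc]
  · intro x hx
    have hy : Qᵀ *ᵥ x ≠ 0 := by
      intro h
      apply hx
      have : (Q * Qᵀ) *ᵥ x = Q *ᵥ (Qᵀ *ᵥ x) := by rw [Matrix.mulVec_mulVec]
      rw [hQQ, Matrix.one_mulVec, h, Matrix.mulVec_zero] at this
      exact this
    have key : star x ⬝ᵥ ((Q * X * Qᵀ) *ᵥ x) = star (Qᵀ *ᵥ x) ⬝ᵥ (X *ᵥ (Qᵀ *ᵥ x)) := by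
      have h1 : (Q * X * Qᵀ) *ᵥ x = Q *ᵥ (X *ᵥ (Qᵀ *ᵥ x)) := by
        rw [Matrix.mulVec_mulVec, Matrix.mulVec_mulVec, Matrix.mul_assoc]
      rw [h1]
      simp only [star_trivial]
      rw [Matrix.dotProduct_mulVec x Q, ← Matrix.mulVec_transpose]
    rw [key]
    exact hX.dotProduct_mulVec_pos hy

/-- Chain rule for an arbitrary corotational rate: for an isotropic,
Fréchet differentiable `σ : Sym⁺⁺(3) → Sym(3)`, a differentiable curve `B` of positive
definite symmetric matrices and a skew-symmetric spin `Ω`,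
`(d/dt)[σ(B(t))] − Ω σ(B₀) + σ(B₀) Ω = Dσ(B₀).(B' − Ω B₀ + B₀ Ω)`. -/
theorem corotational_chain_rule
    (σ : M3 → M3)
    (hmaps : ∀ X : M3, X.PosDef → (σ X).IsSymm)
    (hiso : ∀ (Q X : M3), Qᵀ * Q = 1 → X.PosDef → σ (Q * X * Qᵀ) = Q * σ X * Qᵀ)
    (B : ℝ → M3) (hBpos : ∀ t, (B t).PosDef)
    (t₀ : ℝ) (B' : M3) (hB : HasDerivAt B B' t₀)
    (Ω : M3) (hΩ : Ωᵀ = -Ω)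
    (T : M3 →L[ℝ] M3)
    (hT : HasFDerivWithinAt σ T {X : M3 | X.PosDef} (B t₀)) :
    HasDerivAt (fun t => σ (B t))
      (T (B' - Ω * B t₀ + B t₀ * Ω) + Ω * σ (B t₀) - σ (B t₀) * Ω) t₀ := by
  haveI : CompleteSpace M3 := FiniteDimensional.complete ℝ M3
  set B₀ := B t₀ with hB₀
  -- the rotation curve
  set Q : ℝ → M3 := fun s => exp (s • Ω) with hQdef
  have hQexp : ∀ s, Q s = exp (s • Ω) := fun s => rfl
  have hQT : ∀ s, (Q s)ᵀ = exp (s • (-Ω)) := by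
    intro s
    rw [hQexp, ← Matrix.exp_transpose, Matrix.transpose_smul, hΩ, smul_neg]
  have hQorth : ∀ s, (Q s)ᵀ * Q s = 1 := by
    intro s
    have hc : Commute (s • -Ω) (s • Ω) :=
      (((Commute.refl Ω).neg_left).smul_left s).smul_right s
    rw [hQT, hQexp, ← Matrix.exp_add_of_commute (s • -Ω) (s • Ω) hc]
    simp
  have hQ0 : Q 0 = 1 := by simp [hQexp]
  -- derivative of Q at 0 is Ω
  have hQd : HasDerivAt Q Ω 0 := by
    have := hasDerivAt_exp_smul_const (𝕂 := ℝ) Ω (0 : ℝ)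
    simp at this
    exact this
  have hQTd : HasDerivAt (fun s => (Q s)ᵀ) (-Ω) 0 := by
    have h := hasDerivAt_exp_smul_const (𝕂 := ℝ) (-Ω) (0 : ℝ)
    simp only [zero_smul, exp_zero, one_mul] at h
    rw [show (fun s => (Q s)ᵀ) = fun s => exp (s • -Ω) from funext hQT]
    exact h
  -- derivative of s ↦ Q s * B₀ * (Q s)ᵀ at 0
  have hg : HasDerivAt (fun s => Q s * B₀ * (Q s)ᵀ) (Ω * B₀ - B₀ * Ω) 0 := by
    have h1 : HasDerivAt (fun s => Q s * B₀) (Ω * B₀) 0 := by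
      exact hQd.mul_const B₀
    have := h1.mul hQTd
    simp only [hQ0, Matrix.transpose_one, Matrix.one_mul, Matrix.mul_one] at this
    refine HasDerivAt.congr_deriv this ?_
    rw [mul_neg]
    abel
  -- derivative of s ↦ Q s * σ B₀ * (Q s)ᵀ at 0
  have hh : HasDerivAt (fun s => Q s * σ B₀ * (Q s)ᵀ)
      (Ω * σ B₀ - σ B₀ * Ω) 0 := by
    have h1 : HasDerivAt (fun s => Q s * σ B₀) (Ω * σ B₀) 0 := by
      exact hQd.mul_const (σ B₀)
    have := h1.mul hQTd
    simp only [hQ0, Matrix.transpose_one, Matrix.one_mul, Matrix.mul_one] at this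
    refine HasDerivAt.congr_deriv this ?_
    rw [mul_neg]
    abel
  -- derivative of s ↦ σ (Q s * B₀ * (Q s)ᵀ) at 0, via chain rule
  have hmaps' : Set.MapsTo (fun s => Q s * B₀ * (Q s)ᵀ) Set.univ {X : M3 | X.PosDef} := by
    intro s _
    exact posDef_conj _ _ (hQorth s) (hBpos t₀)
  have hT0 : HasFDerivWithinAt σ T {X : M3 | X.PosDef} (Q 0 * B₀ * (Q 0)ᵀ) := by
    simpa [hQ0] using hT
  have hcomp : HasDerivAt (fun s => σ (Q s * B₀ * (Q s)ᵀ)) (T (Ω * B₀ - B₀ * Ω)) 0 := by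
    refine hasDerivWithinAt_univ.mp ?_
    exact hT0.comp_hasDerivWithinAt 0 (hg.hasDerivWithinAt) hmaps'
  -- but σ (Q s * B₀ * (Q s)ᵀ) = Q s * σ B₀ * (Q s)ᵀ, so derivatives agree
  have heq : (fun s => σ (Q s * B₀ * (Q s)ᵀ)) = fun s => Q s * σ B₀ * (Q s)ᵀ := by
    funext s
    exact hiso (Q s) B₀ (hQorth s) (hBpos t₀)
  rw [heq] at hcomp
  have hkey : T (Ω * B₀ - B₀ * Ω) = Ω * σ B₀ - σ B₀ * Ω := hcomp.unique hh
  -- main chain rule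
  have hmain : HasDerivAt (fun t => σ (B t)) (T B') t₀ := by
    refine hasDerivWithinAt_univ.mp ?_
    exact hT.comp_hasDerivWithinAt t₀ hB.hasDerivWithinAt
      (fun t _ => hBpos t)
  have : T (B' - Ω * B₀ + B₀ * Ω) + Ω * σ B₀ - σ B₀ * Ω = T B' := by
    have hsub : B' - Ω * B₀ + B₀ * Ω = B' - (Ω * B₀ - B₀ * Ω) := by abel
    rw [hsub, map_sub, hkey]
    abel
  rw [this]
  exact hmain
end
end

section
/- Let σ : Sym⁺⁺(3) → Sym(3) be isotropic and Fréchet differentiable, and let F : ℝ → GL(3,ℝ) be differentiable at t₀. Set B(t) = F(t) F(t)ᵀ, L = F'(t₀) F(t₀)⁻¹, D = sym L, W = skew L, and B₀ = B(t₀). Then the Zaremba–Jaumann rate of σ(B(t)) at t₀ satisfies (d/dt)[σ(B(t))]|_{t₀} − W σ(B₀) + σ(B₀) W = Dσ(B₀).(D B₀ + B₀ D). -/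
open Matrix

noncomputable section

attribute [local instance] Matrix.frobeniusNormedAddCommGroup Matrix.frobeniusNormedSpace
attribute [local instance] Matrix.frobeniusNormedRing Matrix.frobeniusNormedAlgebra

namespace ZJ

def trCLM : M3 →L[ℝ] M3 :=
  (Matrix.transposeLinearEquiv (Fin 3) (Fin 3) ℝ ℝ).toLinearMap.toContinuousLinearMap

@[simp] lemma trCLM_apply (A : M3) : trCLM A = Aᵀ := rfl

lemma hasDerivAt_transpose {f : ℝ → M3} {f' : M3} {x : ℝ} (hf : HasDerivAt f f' x) :
    HasDerivAt (fun t => (f t)ᵀ) f'ᵀ x := by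
  exact (trCLM.hasFDerivAt.comp_hasDerivAt x hf)

lemma posDef_mul_transpose {A : M3} (hA : IsUnit A.det) : (A * Aᵀ).PosDef := by
  have hps : (A * Aᵀ).PosSemidef := by
    simpa [Matrix.conjTranspose_eq_transpose_of_trivial] using
      Matrix.posSemidef_self_mul_conjTranspose A
  refine Matrix.PosDef.of_dotProduct_mulVec_pos hps.1 fun x hx => ?_
  have h1 : star x ⬝ᵥ (A * Aᵀ) *ᵥ x = (Aᵀ *ᵥ x) ⬝ᵥ (Aᵀ *ᵥ x) := by
    rw [← Matrix.mulVec_mulVec, Matrix.dotProduct_mulVec, star_trivial,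
      ← Matrix.mulVec_transpose]
  have hne : Aᵀ *ᵥ x ≠ 0 := by
    intro h
    have hAT : IsUnit (Aᵀ).det := by simpa [Matrix.det_transpose] using hA
    have := congrArg (fun v => (Aᵀ)⁻¹ *ᵥ v) h
    simp only [Matrix.mulVec_mulVec, Matrix.nonsing_inv_mul _ hAT, Matrix.one_mulVec,
      Matrix.mulVec_zero] at this
    exact hx this
  have h0 : (Aᵀ *ᵥ x) ⬝ᵥ (Aᵀ *ᵥ x) ≠ 0 := fun h => hne (dotProduct_self_eq_zero.mp h)
  have h2 : 0 ≤ star x ⬝ᵥ (A * Aᵀ) *ᵥ x := hps.dotProduct_mulVec_nonneg x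
  rw [h1] at h2 ⊢
  exact lt_of_le_of_ne h2 (Ne.symm h0)

lemma posDef_conj {Q X : M3} (hQ : Qᵀ * Q = 1) (hX : X.PosDef) : (Q * X * Qᵀ).PosDef := by
  have hQdet : IsUnit Q.det := by
    have : Q.det * Q.det = 1 := by
      have := congrArg Matrix.det hQ
      simpa [Matrix.det_mul, Matrix.det_transpose, mul_comm] using this
    exact IsUnit.of_mul_eq_one _ this
  refine Matrix.PosDef.of_dotProduct_mulVec_pos ?_ ?_
  · have hX1 : Xᵀ = X := by
      exact (by simpa [Matrix.conjTranspose_eq_transpose_of_trivial] using hX.1 : X.IsSymm)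
    show (Q * X * Qᵀ)ᴴ = Q * X * Qᵀ
    simp [Matrix.conjTranspose_eq_transpose_of_trivial, Matrix.transpose_mul, hX1, mul_assoc]
  · intro x hx
    have key : star x ⬝ᵥ (Q * X * Qᵀ) *ᵥ x = star (Qᵀ *ᵥ x) ⬝ᵥ X *ᵥ (Qᵀ *ᵥ x) := by
      simp only [star_trivial, ← Matrix.mulVec_mulVec]
      rw [Matrix.dotProduct_mulVec, ← Matrix.mulVec_transpose]
    rw [key]
    refine hX.dotProduct_mulVec_pos fun h => ?_
    have hQT : IsUnit (Qᵀ).det := by simpa [Matrix.det_transpose] using hQdet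
    have := congrArg (fun v => (Qᵀ)⁻¹ *ᵥ v) h
    simp only [Matrix.mulVec_mulVec, Matrix.nonsing_inv_mul _ hQT, Matrix.one_mulVec,
      Matrix.mulVec_zero] at this
    exact hx this


open NormedSpace in
lemma key (σ : M3 → M3)
    (hiso : ∀ (Q X : M3), Qᵀ * Q = 1 → X.PosDef → σ (Q * X * Qᵀ) = Q * σ X * Qᵀ)
    (T : M3 →L[ℝ] M3) {B₀ W : M3}
    (hT : HasFDerivWithinAt σ T {X : M3 | X.PosDef} B₀)
    (hB : B₀.PosDef) (hWs : Wᵀ = -W) :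
    T (W * B₀ + B₀ * Wᵀ) = W * σ B₀ + σ B₀ * Wᵀ := by
  set Q : ℝ → M3 := fun s => exp (s • W) with hQdef
  have hQT : ∀ s, (Q s)ᵀ = exp (-(s • W)) := by
    intro s
    rw [hQdef]
    simp only
    rw [← Matrix.exp_transpose, Matrix.transpose_smul, hWs, smul_neg]
  have hQorth : ∀ s, (Q s)ᵀ * Q s = 1 := by
    intro s
    rw [hQT s, show Q s = exp (s • W) from rfl,
      ← Matrix.exp_add_of_commute _ _ (Commute.neg_left (Commute.refl (s • W : M3))), neg_add_cancel,
      exp_zero]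
  have hQ0 : Q 0 = 1 := by simp [hQdef, exp_zero]
  have hQ' : HasDerivAt Q W 0 := by
    have := hasDerivAt_exp_smul_const (𝕂 := ℝ) W (0 : ℝ)
    simp at this; exact this
  have hQT' : HasDerivAt (fun s => (Q s)ᵀ) Wᵀ 0 := hasDerivAt_transpose hQ'
  have hc' : HasDerivAt (fun s => Q s * B₀ * (Q s)ᵀ) (W * B₀ + B₀ * Wᵀ) 0 := by
    have h1 : HasDerivAt (fun s => Q s * B₀) (W * B₀) 0 := by
      exact hQ'.mul_const B₀
    have := h1.mul hQT'
    simp [hQ0] at this; exact this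
  have hmaps : Set.MapsTo (fun s => Q s * B₀ * (Q s)ᵀ) Set.univ {X : M3 | X.PosDef} :=
    fun s _ => posDef_conj (hQorth s) hB
  have h2 : HasDerivAt (fun s => σ (Q s * B₀ * (Q s)ᵀ)) (T (W * B₀ + B₀ * Wᵀ)) 0 := by
    have := hT.comp_hasDerivWithinAt_of_eq (0 : ℝ)
      (hc'.hasDerivWithinAt (s := Set.univ)) hmaps (by simp [hQ0])
    rw [hasDerivWithinAt_univ] at this
    exact this
  have heq : (fun s => σ (Q s * B₀ * (Q s)ᵀ)) = fun s => Q s * σ B₀ * (Q s)ᵀ := by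
    funext s; exact hiso (Q s) B₀ (hQorth s) hB
  rw [heq] at h2
  have h3 : HasDerivAt (fun s => Q s * σ B₀ * (Q s)ᵀ) (W * σ B₀ + σ B₀ * Wᵀ) 0 := by
    have h1 : HasDerivAt (fun s => Q s * σ B₀) (W * σ B₀) 0 := by
      exact hQ'.mul_const (σ B₀)
    have := h1.mul hQT'
    simp [hQ0] at this; exact this
  exact h2.unique h3

end ZJ

/-- Formula for the Zaremba–Jaumann rate: for an isotropic, Fréchet
differentiable `σ : Sym⁺⁺(3) → Sym(3)` and a differentiable curve `F` of invertible
matrices, with `B = F Fᵀ`, `L = F' F⁻¹`, `D = sym L`, `W = skew L`, one has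
`(d/dt)[σ(B(t))] − W σ(B₀) + σ(B₀) W = Dσ(B₀).(D B₀ + B₀ D)`. -/
theorem zaremba_jaumann_formula
    (σ : M3 → M3)
    (hmaps : ∀ X : M3, X.PosDef → (σ X).IsSymm)
    (hiso : ∀ (Q X : M3), Qᵀ * Q = 1 → X.PosDef → σ (Q * X * Qᵀ) = Q * σ X * Qᵀ)
    (F : ℝ → M3) (hFinv : ∀ t, IsUnit (F t).det)
    (t₀ : ℝ) (F' : M3) (hF : HasDerivAt F F' t₀)
    (T : M3 →L[ℝ] M3)
    (hT : HasFDerivWithinAt σ T {X : M3 | X.PosDef} (F t₀ * (F t₀)ᵀ))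
    (L D W B₀ : M3)
    (hL : L = F' * (F t₀)⁻¹)
    (hD : D = (1 / 2 : ℝ) • (L + Lᵀ))
    (hW : W = (1 / 2 : ℝ) • (L - Lᵀ))
    (hB₀ : B₀ = F t₀ * (F t₀)ᵀ) :
    HasDerivAt (fun t => σ (F t * (F t)ᵀ))
      (T (D * B₀ + B₀ * D) + W * σ B₀ - σ B₀ * W) t₀ := by
  have hB₀pd : B₀.PosDef := hB₀ ▸ ZJ.posDef_mul_transpose (hFinv t₀)
  have hT' : HasFDerivWithinAt σ T {X : M3 | X.PosDef} B₀ := hB₀ ▸ hT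
  have hWs : Wᵀ = -W := by
    rw [hW, Matrix.transpose_smul, Matrix.transpose_sub, Matrix.transpose_transpose, smul_sub,
      smul_sub, neg_sub]
  have hF' : F' = L * F t₀ := by
    rw [hL, Matrix.mul_assoc, Matrix.nonsing_inv_mul _ (hFinv t₀), Matrix.mul_one]
  have hDW : D + W = L := by rw [hD, hW]; module
  have hDW' : D - W = Lᵀ := by rw [hD, hW]; module
  have hB' : HasDerivAt (fun t => F t * (F t)ᵀ) (F' * (F t₀)ᵀ + F t₀ * F'ᵀ) t₀ :=
    hF.mul (ZJ.hasDerivAt_transpose hF)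
  have hmapsB : Set.MapsTo (fun t => F t * (F t)ᵀ) Set.univ {X : M3 | X.PosDef} :=
    fun t _ => ZJ.posDef_mul_transpose (hFinv t)
  have h1 : HasDerivAt (fun t => σ (F t * (F t)ᵀ)) (T (F' * (F t₀)ᵀ + F t₀ * F'ᵀ)) t₀ := by
    have := hT.comp_hasDerivWithinAt t₀ (hB'.hasDerivWithinAt (s := Set.univ)) hmapsB
    rw [hasDerivWithinAt_univ] at this
    exact this
  have harg : F' * (F t₀)ᵀ + F t₀ * F'ᵀ = (D * B₀ + B₀ * D) + (W * B₀ + B₀ * Wᵀ) := by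
    calc F' * (F t₀)ᵀ + F t₀ * F'ᵀ = L * B₀ + B₀ * Lᵀ := by
          rw [hF', hB₀, Matrix.transpose_mul]; noncomm_ring
      _ = (D + W) * B₀ + B₀ * (D - W) := by rw [hDW, hDW']
      _ = (D * B₀ + B₀ * D) + (W * B₀ + B₀ * Wᵀ) := by rw [hWs]; noncomm_ring
  have hkey := ZJ.key σ hiso T hT' hB₀pd hWs
  have hT2 : T (F' * (F t₀)ᵀ + F t₀ * F'ᵀ)
      = T (D * B₀ + B₀ * D) + W * σ B₀ - σ B₀ * W := by
    rw [harg, map_add, hkey, hWs]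
    noncomm_ring
  rw [hT2] at h1
  exact h1
end
end

section
/- Let V : ℝ → Sym⁺⁺(3) and R : ℝ → O(3) be differentiable at t₀, and set F(t) = V(t) R(t). With L = F'(t₀) F(t₀)⁻¹, D = sym L, Ω = R'(t₀) R(t₀)ᵀ, and B = V(t₀)², one has the identity L B + B Lᵀ − Ω B + B Ω = 2 V(t₀) D V(t₀). -/
open Matrix

noncomputable section

attribute [local instance] Matrix.frobeniusNormedAddCommGroup Matrix.frobeniusNormedSpace
attribute [local instance] Matrix.frobeniusNormedRing Matrix.frobeniusNormedAlgebra

lemma hasDerivAt_transpose {f : ℝ → M3} {f' : M3} {t : ℝ} (hf : HasDerivAt f f' t) :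
    HasDerivAt (fun s => (f s)ᵀ) f'ᵀ t := by
  have e : M3 →L[ℝ] M3 :=
    LinearMap.toContinuousLinearMap (Matrix.transposeLinearEquiv (Fin 3) (Fin 3) ℝ ℝ).toLinearMap
  have := (LinearMap.toContinuousLinearMap
    (Matrix.transposeLinearEquiv (Fin 3) (Fin 3) ℝ ℝ).toLinearMap).hasFDerivAt.comp_hasDerivAt
    t hf
  exact this

/-- For the left polar decomposition `F = V R` with `V` positive definite
symmetric and `R` orthogonal, with `L = F' F⁻¹`, `D = sym L`, `Ω = R' Rᵀ` and `B = V²`,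
one has `L B + B Lᵀ − Ω B + B Ω = 2 V D V`. -/
theorem polar_rate_identity
    (V : ℝ → M3) (hVpos : ∀ t, (V t).PosDef)
    (R : ℝ → M3) (hRorth : ∀ t, (R t)ᵀ * R t = 1)
    (t₀ : ℝ) (V' R' F' : M3)
    (hV : HasDerivAt V V' t₀) (hR : HasDerivAt R R' t₀)
    (hF : HasDerivAt (fun t => V t * R t) F' t₀)
    (L D Ω B : M3)
    (hL : L = F' * (V t₀ * R t₀)⁻¹)
    (hD : D = (1 / 2 : ℝ) • (L + Lᵀ))
    (hΩ : Ω = R' * (R t₀)ᵀ)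
    (hB : B = V t₀ * V t₀) :
    L * B + B * Lᵀ - Ω * B + B * Ω = (2 : ℝ) • (V t₀ * D * V t₀) := by
  set A := V t₀ with hA
  set Q := R t₀ with hQ
  -- symmetry of V t for all t
  have hVsym : ∀ t, (V t)ᵀ = V t := by
    intro t
    have h := (hVpos t).isHermitian
    simpa [Matrix.IsHermitian, Matrix.conjTranspose_eq_transpose_of_trivial] using h
  have hAs : Aᵀ = A := hVsym t₀
  -- symmetry of V'
  have hV's : V'ᵀ = V' := by
    have h1 : HasDerivAt (fun s => (V s)ᵀ) V'ᵀ t₀ := hasDerivAt_transpose hV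
    have h2 : HasDerivAt (fun s => (V s)ᵀ) V' t₀ := by
      simpa [hVsym] using hV
    exact h1.unique h2
  -- orthogonality facts
  have hQ1 : Qᵀ * Q = 1 := hRorth t₀
  have hQ2 : Q * Qᵀ = 1 := mul_eq_one_comm.mp hQ1
  -- invertibility of A
  have hAdet : IsUnit A.det := (Matrix.isUnit_iff_isUnit_det A).mp ((hVpos t₀).isUnit)
  have hiA1 : A⁻¹ * A = 1 := Matrix.nonsing_inv_mul A hAdet
  have hiA2 : A * A⁻¹ = 1 := Matrix.mul_nonsing_inv A hAdet
  have hiAs : (A⁻¹)ᵀ = A⁻¹ := by rw [Matrix.transpose_nonsing_inv, hAs]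
  -- antisymmetry of Ω : differentiate R Rᵀ = 1
  have hΩanti : Ωᵀ = -Ω := by
    have h1 : HasDerivAt (fun s => R s * (R s)ᵀ) (R' * Qᵀ + Q * R'ᵀ) t₀ :=
      hR.mul (hasDerivAt_transpose hR)
    have h2 : HasDerivAt (fun s => R s * (R s)ᵀ) 0 t₀ := by
      have : (fun s => R s * (R s)ᵀ) = fun _ => (1 : M3) := by
        funext s; exact mul_eq_one_comm.mp (hRorth s)
      rw [this]; exact hasDerivAt_const t₀ (1 : M3) |>.congr_deriv rfl
    have h3 : R' * Qᵀ + Q * R'ᵀ = 0 := h1.unique h2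
    have h4 : Q * R'ᵀ = -(R' * Qᵀ) := by linear_combination (norm := abel) h3
    calc Ωᵀ = (R' * Qᵀ)ᵀ := by rw [hΩ]
    _ = Q * R'ᵀ := by rw [Matrix.transpose_mul, Matrix.transpose_transpose]
    _ = -Ω := by rw [h4, hΩ]
  -- F' = V' Q + A R'
  have hF' : F' = V' * Q + A * R' := ((hV.mul hR).unique hF).symm
  -- explicit formula for L
  have hinvF : (A * Q)⁻¹ = Qᵀ * A⁻¹ := by
    rw [Matrix.mul_inv_rev]
    congr 1
    rw [Matrix.inv_eq_left_inv hQ1]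
  -- cancellation helpers
  have cQ : ∀ X : M3, Q * (Qᵀ * X) = X := fun X => by rw [← Matrix.mul_assoc, hQ2, one_mul]
  have cA1 : ∀ X : M3, A⁻¹ * (A * X) = X := fun X => by rw [← Matrix.mul_assoc, hiA1, one_mul]
  have cA2 : ∀ X : M3, A * (A⁻¹ * X) = X := fun X => by rw [← Matrix.mul_assoc, hiA2, one_mul]
  have hLe : L = V' * A⁻¹ + A * (R' * (Qᵀ * A⁻¹)) := by
    rw [hL, hF', hinvF, add_mul]
    simp only [Matrix.mul_assoc, cQ]
  have hQR' : Q * R'ᵀ = -Ω := by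
    rw [← hΩanti, hΩ, Matrix.transpose_mul, Matrix.transpose_transpose]
  have hLT : Lᵀ = A⁻¹ * V' - A⁻¹ * (Ω * A) := by
    rw [hLe]
    simp only [Matrix.transpose_add, Matrix.transpose_mul, Matrix.transpose_transpose,
      hiAs, hV's, hAs]
    rw [show A⁻¹ * Q * R'ᵀ * A = A⁻¹ * (Q * R'ᵀ * A) by simp only [Matrix.mul_assoc]]
    rw [hQR']
    simp [sub_eq_add_neg, Matrix.neg_mul, Matrix.mul_neg]
  -- rewrite L in terms of Ω
  have hLe' : L = V' * A⁻¹ + A * (Ω * A⁻¹) := by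
    rw [hLe, hΩ]; simp only [Matrix.mul_assoc]
  -- compute the four products
  have e1 : L * B = V' * A + A * (Ω * A) := by
    rw [hLe', hB, add_mul]
    simp only [Matrix.mul_assoc, cA1, cA2, hiA1, hiA2, Matrix.mul_one, mul_one]
  have e2 : B * Lᵀ = A * V' - A * (Ω * A) := by
    rw [hLT, hB, mul_sub]
    simp only [Matrix.mul_assoc, cA1, cA2, hiA1, hiA2, Matrix.mul_one, mul_one]
  have e3 : A * (L * A) = A * V' + A * (A * Ω) := by
    rw [hLe', add_mul, mul_add]
    simp only [Matrix.mul_assoc, cA1, cA2, hiA1, hiA2, Matrix.mul_one, mul_one]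
  have e4 : A * (Lᵀ * A) = V' * A - Ω * (A * A) := by
    rw [hLT, sub_mul, mul_sub]
    simp only [Matrix.mul_assoc, cA1, cA2, hiA1, hiA2, Matrix.mul_one, mul_one]
  -- put it together
  have hRHS : (2 : ℝ) • (A * D * A) = A * (L * A) + A * (Lᵀ * A) := by
    rw [hD, Matrix.mul_smul, Matrix.smul_mul, smul_smul]
    norm_num
    rw [mul_add, add_mul]
    simp only [Matrix.mul_assoc]
  rw [hRHS, e1, e2, e3, e4, hB]
  simp only [Matrix.mul_assoc]
  abel
end
end

section
/- Vanishing corotational rate makes every isotropic scalar invariant stationary: let σ : ℝ → Sym(3) be differentiable at t₀ and suppose there is a skew-symmetric 3×3 real matrix Ω with σ'(t₀) = Ω σ(t₀) − σ(t₀) Ω. Then for every Fréchet differentiable isotropic scalar function I : Sym(3) → ℝ (i.e. I(Qᵀ S Q) = I(S) for all Q ∈ O(3) and S ∈ Sym(3)), one has (d/dt)[I(σ(t))]|_{t₀} = 0. -/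
open Matrix

noncomputable section

attribute [local instance] Matrix.frobeniusNormedAddCommGroup Matrix.frobeniusNormedSpace

attribute [local instance] Matrix.frobeniusNormedRing Matrix.frobeniusNormedAlgebra

open NormedSpace in
/-- Key linear-algebra fact: the derivative of an isotropic invariant annihilates
commutators `Ω S - S Ω` with `Ω` skew. -/
lemma key_phi_comm_zero (S Ωm : M3) (hS : S.IsSymm) (hΩ : Ωmᵀ = -Ωm)
    (I : M3 → ℝ)
    (hiso : ∀ (Q T : M3), Qᵀ * Q = 1 → T.IsSymm → I (Qᵀ * T * Q) = I T)
    (φ : M3 →L[ℝ] ℝ)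
    (hI : HasFDerivWithinAt I φ {X : M3 | X.IsSymm} S) :
    φ (Ωm * S - S * Ωm) = 0 := by
  -- the curve c s = exp(s•(-Ω)) * S * exp(s•Ω)
  set c : ℝ → M3 := fun s => NormedSpace.exp (s • (-Ωm)) * S * NormedSpace.exp (s • Ωm) with hc
  have hexpT : ∀ s : ℝ, (NormedSpace.exp (s • Ωm))ᵀ = NormedSpace.exp (s • (-Ωm)) := by
    intro s
    rw [← Matrix.exp_transpose, Matrix.transpose_smul, hΩ, smul_neg]
  have horth : ∀ s : ℝ, (NormedSpace.exp (s • Ωm))ᵀ * NormedSpace.exp (s • Ωm) = 1 := by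
    intro s
    rw [hexpT, smul_neg, ← Matrix.exp_add_of_commute _ _ (Commute.neg_left (Commute.refl (s • Ωm))),
      neg_add_cancel, NormedSpace.exp_zero]
  have hcsym : ∀ s : ℝ, (c s).IsSymm := by
    intro s
    unfold c
    unfold Matrix.IsSymm
    rw [Matrix.transpose_mul, Matrix.transpose_mul, hexpT, hS.eq]
    rw [show (NormedSpace.exp (s • (-Ωm)))ᵀ = NormedSpace.exp (s • Ωm) by
      rw [← Matrix.exp_transpose, Matrix.transpose_smul, Matrix.transpose_neg, hΩ, neg_neg]]
    rw [mul_assoc]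
  have hconst : ∀ s : ℝ, I (c s) = I S := by
    intro s
    have := hiso (NormedSpace.exp (s • Ωm)) S (horth s) hS
    rwa [hexpT] at this
  have hc0 : c 0 = S := by
    simp [hc, NormedSpace.exp_zero]
  -- derivative of c at 0
  have hd1 : HasDerivAt (fun s : ℝ => NormedSpace.exp (s • (-Ωm))) (-Ωm) 0 := by
    have := hasDerivAt_exp_smul_const (𝕂 := ℝ) (-Ωm) (0 : ℝ)
    simp only [zero_smul, NormedSpace.exp_zero, one_mul] at this
    exact this
  have hd2 : HasDerivAt (fun s : ℝ => NormedSpace.exp (s • Ωm)) Ωm 0 := by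
    have := hasDerivAt_exp_smul_const (𝕂 := ℝ) Ωm (0 : ℝ)
    simp only [zero_smul, NormedSpace.exp_zero, one_mul] at this
    exact this
  have hdc : HasDerivAt c (-(Ωm * S - S * Ωm)) 0 := by
    have h := ((hd1.mul_const S).mul hd2)
    simp only [zero_smul, NormedSpace.exp_zero] at h
    rw [show -(Ωm * S - S * Ωm) = -Ωm * S * 1 + 1 * S * Ωm by noncomm_ring]
    exact h
  -- compose with I within the symmetric set
  have hcomp : HasDerivAt (fun s => I (c s)) (φ (-(Ωm * S - S * Ωm))) 0 := by
    rw [← hasDerivWithinAt_univ]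
    have hI' : HasFDerivWithinAt I φ {X : M3 | X.IsSymm} (c 0) := by rwa [hc0]
    exact hI'.comp_hasDerivWithinAt 0 (hdc.hasDerivWithinAt)
      (fun s _ => hcsym s)
  have hconst' : HasDerivAt (fun s => I (c s)) 0 0 := by
    have : (fun s => I (c s)) = fun _ => I S := funext hconst
    rw [this]; exact hasDerivAt_const 0 _
  have := hconst'.unique hcomp
  rw [map_neg] at this
  linarith [this]

/-- If the corotational rate of `σ` vanishes at `t₀`, i.e.
`σ'(t₀) = Ω σ(t₀) − σ(t₀) Ω` for some skew-symmetric `Ω`, then every Fréchet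
differentiable isotropic scalar invariant `I : Sym(3) → ℝ` is stationary along `σ`. -/
theorem isotropic_invariant_stationary
    (σ : ℝ → M3) (t₀ : ℝ) (hσsym : ∀ t, (σ t).IsSymm)
    (Ω : M3) (hΩ : Ωᵀ = -Ω)
    (hσ : HasDerivAt σ (Ω * σ t₀ - σ t₀ * Ω) t₀)
    (I : M3 → ℝ)
    (hiso : ∀ (Q S : M3), Qᵀ * Q = 1 → S.IsSymm → I (Qᵀ * S * Q) = I S)
    (φ : M3 →L[ℝ] ℝ)
    (hI : HasFDerivWithinAt I φ {X : M3 | X.IsSymm} (σ t₀)) :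
    HasDerivAt (fun t => I (σ t)) 0 t₀ := by
  have hkey : φ (Ω * σ t₀ - σ t₀ * Ω) = 0 :=
    key_phi_comm_zero (σ t₀) Ω (hσsym t₀) hΩ I hiso φ hI
  have h : HasDerivAt (fun t => I (σ t)) (φ (Ω * σ t₀ - σ t₀ * Ω)) t₀ := by
    rw [← hasDerivWithinAt_univ]
    exact hI.comp_hasDerivWithinAt t₀ (hσ.hasDerivWithinAt) (fun t _ => hσsym t)
  rwa [hkey] at h
end
end

section
/- The matrix logarithm is strictly Hilbert-monotone: for all B₁, B₂ ∈ Sym⁺⁺(3) with B₁ ≠ B₂ one has ⟨log B₁ − log B₂, B₁ − B₂⟩ > 0, where ⟨X,Y⟩ = tr(X Yᵀ) is the Frobenius inner product. -/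
open Matrix

noncomputable section

lemma trace_diag_W (d e : Fin 3 → ℝ) (W : M3) :
    trace (diagonal d * W * diagonal e * Wᵀ) = ∑ i, ∑ j, d i * e j * (W i j)^2 := by
  simp only [trace, diag, mul_apply, diagonal_apply, transpose_apply, ite_mul, zero_mul,
    mul_ite, mul_zero, Finset.sum_ite_eq', Finset.sum_ite_eq, Finset.mem_univ, if_true]
  refine Finset.sum_congr rfl fun i _ => Finset.sum_congr rfl fun j _ => by ring

lemma row_sq (W : M3) (h : W * Wᵀ = 1) (i : Fin 3) : ∑ j, (W i j)^2 = 1 := by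
  have := congrFun (congrFun h i) i
  simpa [mul_apply, one_apply, sq] using this

lemma col_sq (W : M3) (h : Wᵀ * W = 1) (j : Fin 3) : ∑ i, (W i j)^2 = 1 := by
  have := congrFun (congrFun h j) j
  simpa [mul_apply, one_apply, sq] using this

lemma conj_pair (U₁ U₂ A B : M3) :
    trace ((U₁ * A * U₁ᵀ) * (U₂ * B * U₂ᵀ)) =
    trace (A * (U₁ᵀ * U₂) * B * (U₁ᵀ * U₂)ᵀ) := by
  rw [transpose_mul, transpose_transpose,
    show (U₁ * A * U₁ᵀ) * (U₂ * B * U₂ᵀ) = U₁ * (A * (U₁ᵀ * U₂) * B * U₂ᵀ) from by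
      simp only [Matrix.mul_assoc],
    trace_mul_comm,
    show (A * (U₁ᵀ * U₂) * B * U₂ᵀ) * U₁ = A * (U₁ᵀ * U₂) * B * (U₂ᵀ * U₁) from by
      simp only [Matrix.mul_assoc]]

lemma main_trace (U₁ U₂ : M3) (h₁ : U₁ * U₁ᵀ = 1) (h₁' : U₁ᵀ * U₁ = 1)
    (h₂ : U₂ * U₂ᵀ = 1) (h₂' : U₂ᵀ * U₂ = 1) (d₁ d₂ e₁ e₂ : Fin 3 → ℝ) :
    trace ((U₁ * diagonal d₁ * U₁ᵀ - U₂ * diagonal d₂ * U₂ᵀ) *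
           (U₁ * diagonal e₁ * U₁ᵀ - U₂ * diagonal e₂ * U₂ᵀ)) =
    ∑ i, ∑ j, (d₁ i - d₂ j) * (e₁ i - e₂ j) * ((U₁ᵀ * U₂) i j)^2 := by
  set W := U₁ᵀ * U₂ with hW
  have hWWt : W * Wᵀ = 1 := by
    rw [hW, transpose_mul, transpose_transpose, Matrix.mul_assoc,
      ← Matrix.mul_assoc U₂, h₂, Matrix.one_mul, h₁']
  have hWtW : Wᵀ * W = 1 := by
    rw [hW, transpose_mul, transpose_transpose, Matrix.mul_assoc,
      ← Matrix.mul_assoc U₁, h₁, Matrix.one_mul, h₂']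
  have hWt : U₂ᵀ * U₁ = Wᵀ := by rw [hW, transpose_mul, transpose_transpose]
  have t11 : trace ((U₁ * diagonal d₁ * U₁ᵀ) * (U₁ * diagonal e₁ * U₁ᵀ)) =
      ∑ i, ∑ j, d₁ i * e₁ i * (W i j)^2 := by
    rw [conj_pair, h₁', Matrix.mul_one, transpose_one, Matrix.mul_one,
      diagonal_mul_diagonal, trace_diagonal]
    refine Finset.sum_congr rfl fun i _ => ?_
    rw [← Finset.mul_sum, row_sq W hWWt i, mul_one]
  have t22 : trace ((U₂ * diagonal d₂ * U₂ᵀ) * (U₂ * diagonal e₂ * U₂ᵀ)) =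
      ∑ i, ∑ j, d₂ j * e₂ j * (W i j)^2 := by
    rw [conj_pair, h₂', Matrix.mul_one, transpose_one, Matrix.mul_one,
      diagonal_mul_diagonal, trace_diagonal, Finset.sum_comm]
    refine Finset.sum_congr rfl fun j _ => ?_
    rw [← Finset.mul_sum, col_sq W hWtW j, mul_one]
  have t12 : trace ((U₁ * diagonal d₁ * U₁ᵀ) * (U₂ * diagonal e₂ * U₂ᵀ)) =
      ∑ i, ∑ j, d₁ i * e₂ j * (W i j)^2 := by
    rw [conj_pair, ← hW, trace_diag_W]
  have t21 : trace ((U₂ * diagonal d₂ * U₂ᵀ) * (U₁ * diagonal e₁ * U₁ᵀ)) =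
      ∑ i, ∑ j, d₂ j * e₁ i * (W i j)^2 := by
    rw [conj_pair, hWt, trace_diag_W, Finset.sum_comm]
    refine Finset.sum_congr rfl fun i _ => Finset.sum_congr rfl fun j _ => by
      rw [transpose_apply]
  rw [Matrix.sub_mul, Matrix.mul_sub, Matrix.mul_sub, trace_sub, trace_sub, trace_sub,
    t11, t12, t21, t22]
  simp only [← Finset.sum_sub_distrib]
  refine Finset.sum_congr rfl fun i _ => Finset.sum_congr rfl fun j _ => by ring

lemma double_sum_pos (f : Fin 3 → Fin 3 → ℝ) (hf : ∀ i j, 0 ≤ f i j)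
    (i₀ j₀ : Fin 3) (h : 0 < f i₀ j₀) : 0 < ∑ i, ∑ j, f i j :=
  Finset.sum_pos' (fun i _ => Finset.sum_nonneg fun j _ => hf i j)
    ⟨i₀, Finset.mem_univ _,
      Finset.sum_pos' (fun j _ => hf i₀ j) ⟨j₀, Finset.mem_univ _, h⟩⟩

lemma exists_pos_of_double_sum_pos (f : Fin 3 → Fin 3 → ℝ)
    (h : 0 < ∑ i, ∑ j, f i j) : ∃ i j, 0 < f i j := by
  by_contra hc
  push_neg at hc
  have : ∑ i, ∑ j, f i j ≤ 0 :=
    Finset.sum_nonpos fun i _ => Finset.sum_nonpos fun j _ => hc i j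
  linarith

lemma term_nonneg (x y w : ℝ) : 0 ≤ (x - y) * (Real.exp x - Real.exp y) * w^2 := by
  have h1 : 0 ≤ (x - y) * (Real.exp x - Real.exp y) := by
    rcases le_total x y with h | h
    · have := Real.exp_le_exp.2 h
      nlinarith
    · have := Real.exp_le_exp.2 h
      exact mul_nonneg (by linarith) (by linarith)
  exact mul_nonneg h1 (sq_nonneg w)

lemma term_pos (x y w : ℝ) (hxy : x ≠ y) (hw : w ≠ 0) :
    0 < (x - y) * (Real.exp x - Real.exp y) * w^2 := by
  have hw2 : 0 < w^2 := by positivity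
  have h1 : 0 < (x - y) * (Real.exp x - Real.exp y) := by
    rcases lt_or_gt_of_ne hxy with h | h
    · have := Real.exp_lt_exp.2 h
      exact mul_pos_of_neg_of_neg (by linarith) (by linarith)
    · have := Real.exp_lt_exp.2 h
      exact mul_pos (by linarith) (by linarith)
  exact mul_pos h1 hw2

/-- Strict Hilbert-monotonicity of the matrix logarithm: if
`B₁, B₂ ∈ Sym⁺⁺(3)` are distinct, and `X₁, X₂` are the (symmetric) matrix logarithms of
`B₁, B₂` (i.e. `Xᵢ ∈ Sym(3)` with `exp Xᵢ = Bᵢ`), then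
`⟨log B₁ − log B₂, B₁ − B₂⟩ > 0` in the Frobenius inner product. -/
theorem log_strictly_Hilbert_monotone
    (B₁ B₂ X₁ X₂ : M3) (hB₁ : B₁.PosDef) (hB₂ : B₂.PosDef) (hne : B₁ ≠ B₂)
    (hX₁ : X₁.IsSymm) (hX₂ : X₂.IsSymm)
    (hexp₁ : NormedSpace.exp X₁ = B₁) (hexp₂ : NormedSpace.exp X₂ = B₂) :
    0 < Matrix.trace ((X₁ - X₂) * (B₁ - B₂)ᵀ) := by
  -- Hermitian structure
  have hH₁ : X₁.IsHermitian := by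
    rwa [Matrix.IsHermitian, conjTranspose_eq_transpose_of_trivial]
  have hH₂ : X₂.IsHermitian := by
    rwa [Matrix.IsHermitian, conjTranspose_eq_transpose_of_trivial]
  set U₁ : M3 := (Matrix.IsHermitian.eigenvectorUnitary hH₁ : M3) with hU₁def
  set U₂ : M3 := (Matrix.IsHermitian.eigenvectorUnitary hH₂ : M3) with hU₂def
  set d₁ : Fin 3 → ℝ := hH₁.eigenvalues with hd₁def
  set d₂ : Fin 3 → ℝ := hH₂.eigenvalues with hd₂def
  have hU₁o : U₁ * U₁ᵀ = 1 := by
    have := (Matrix.mem_unitaryGroup_iff).mp (Matrix.IsHermitian.eigenvectorUnitary hH₁).2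
    rwa [Matrix.star_eq_conjTranspose, conjTranspose_eq_transpose_of_trivial] at this
  have hU₁o' : U₁ᵀ * U₁ = 1 := by
    have := (Matrix.mem_unitaryGroup_iff').mp (Matrix.IsHermitian.eigenvectorUnitary hH₁).2
    rwa [Matrix.star_eq_conjTranspose, conjTranspose_eq_transpose_of_trivial] at this
  have hU₂o : U₂ * U₂ᵀ = 1 := by
    have := (Matrix.mem_unitaryGroup_iff).mp (Matrix.IsHermitian.eigenvectorUnitary hH₂).2
    rwa [Matrix.star_eq_conjTranspose, conjTranspose_eq_transpose_of_trivial] at this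
  have hU₂o' : U₂ᵀ * U₂ = 1 := by
    have := (Matrix.mem_unitaryGroup_iff').mp (Matrix.IsHermitian.eigenvectorUnitary hH₂).2
    rwa [Matrix.star_eq_conjTranspose, conjTranspose_eq_transpose_of_trivial] at this
  have spec₁ : X₁ = U₁ * diagonal d₁ * U₁ᵀ := by
    have := hH₁.spectral_theorem
    rwa [Unitary.conjStarAlgAut_apply, Matrix.star_eq_conjTranspose, conjTranspose_eq_transpose_of_trivial,
      RCLike.ofReal_real_eq_id, Function.id_comp] at this
  have spec₂ : X₂ = U₂ * diagonal d₂ * U₂ᵀ := by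
    have := hH₂.spectral_theorem
    rwa [Unitary.conjStarAlgAut_apply, Matrix.star_eq_conjTranspose, conjTranspose_eq_transpose_of_trivial,
      RCLike.ofReal_real_eq_id, Function.id_comp] at this
  -- exponentials
  have hinv₁ : U₁⁻¹ = U₁ᵀ := Matrix.inv_eq_right_inv hU₁o
  have hinv₂ : U₂⁻¹ = U₂ᵀ := Matrix.inv_eq_right_inv hU₂o
  have hu₁ : IsUnit U₁ := ⟨⟨U₁, U₁ᵀ, hU₁o, hU₁o'⟩, rfl⟩
  have hu₂ : IsUnit U₂ := ⟨⟨U₂, U₂ᵀ, hU₂o, hU₂o'⟩, rfl⟩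
  have hB₁eq : B₁ = U₁ * diagonal (fun i => Real.exp (d₁ i)) * U₁ᵀ := by
    rw [← hexp₁, spec₁, ← hinv₁, Matrix.exp_conj U₁ (diagonal d₁) hu₁,
      Matrix.exp_diagonal, hinv₁]
    congr 2
    rw [Pi.exp_def]
    funext i
    rw [Real.exp_eq_exp_ℝ]
  have hB₂eq : B₂ = U₂ * diagonal (fun i => Real.exp (d₂ i)) * U₂ᵀ := by
    rw [← hexp₂, spec₂, ← hinv₂, Matrix.exp_conj U₂ (diagonal d₂) hu₂,
      Matrix.exp_diagonal, hinv₂]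
    congr 2
    rw [Pi.exp_def]
    funext i
    rw [Real.exp_eq_exp_ℝ]
  -- symmetry of B₁ - B₂
  have hBsymm : (B₁ - B₂)ᵀ = B₁ - B₂ := by
    rw [transpose_sub, ← hexp₁, ← hexp₂, ← Matrix.exp_transpose, ← Matrix.exp_transpose,
      hX₁.eq, hX₂.eq]
  rw [hBsymm]
  set W : M3 := U₁ᵀ * U₂ with hWdef
  -- the two key trace identities
  have hT : trace ((X₁ - X₂) * (B₁ - B₂)) =
      ∑ i, ∑ j, (d₁ i - d₂ j) * (Real.exp (d₁ i) - Real.exp (d₂ j)) * (W i j)^2 := by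
    rw [spec₁, spec₂, hB₁eq, hB₂eq]
    exact main_trace U₁ U₂ hU₁o hU₁o' hU₂o hU₂o' d₁ d₂ _ _
  have hS : trace ((X₁ - X₂) * (X₁ - X₂)) =
      ∑ i, ∑ j, (d₁ i - d₂ j) * (d₁ i - d₂ j) * (W i j)^2 := by
    nth_rewrite 1 [spec₁, spec₂]
    nth_rewrite 1 [spec₁, spec₂]
    exact main_trace U₁ U₂ hU₁o hU₁o' hU₂o hU₂o' d₁ d₂ d₁ d₂
  -- X₁ ≠ X₂ and positivity of the Frobenius norm squared
  have hXne : X₁ ≠ X₂ := fun h => hne (by rw [← hexp₁, ← hexp₂, h])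
  have hA : X₁ - X₂ ≠ 0 := sub_ne_zero_of_ne hXne
  have hAsym : (X₁ - X₂)ᵀ = X₁ - X₂ := by rw [transpose_sub, hX₁.eq, hX₂.eq]
  have hSpos : 0 < trace ((X₁ - X₂) * (X₁ - X₂)) := by
    nth_rewrite 2 [← hAsym]
    have hexpand : trace ((X₁ - X₂) * (X₁ - X₂)ᵀ) = ∑ i, ∑ j, ((X₁ - X₂) i j)^2 := by
      simp [trace, diag, mul_apply, sq]
    rw [hexpand]
    obtain ⟨i₀, j₀, hij⟩ : ∃ i j, (X₁ - X₂) i j ≠ 0 := by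
      by_contra hc
      push_neg at hc
      exact hA (by ext i j; exact hc i j)
    exact double_sum_pos _ (fun i j => sq_nonneg _) i₀ j₀ (by positivity)
  rw [hS] at hSpos
  obtain ⟨i₀, j₀, hpos⟩ := exists_pos_of_double_sum_pos _ hSpos
  have hdne : d₁ i₀ ≠ d₂ j₀ := by
    intro h
    rw [h] at hpos
    simp at hpos
  have hWne : W i₀ j₀ ≠ 0 := by
    intro h
    rw [h] at hpos
    simp at hpos
  rw [hT]
  exact double_sum_pos _ (fun i j => term_nonneg _ _ _) i₀ j₀ (term_pos _ _ _ hdne hWne)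
end
end

section
/- Let B ∈ Sym⁺⁺(3) and let L : Sym(3) → Sym(3) be the Fréchet derivative at B of the matrix logarithm log : Sym⁺⁺(3) → Sym(3). Then there exists c > 0 (depending on B) such that ⟨L(B D + D B), D⟩ ≥ c ‖D‖² for all D ∈ Sym(3); in particular ⟨L(B D + D B), D⟩ > 0 for every D ∈ Sym(3) \ {0}, even though L(B D + D B) ≠ 2 D in general. -/
open Matrix

noncomputable section

open scoped Classical

attribute [local instance] Matrix.frobeniusNormedAddCommGroup Matrix.frobeniusNormedSpace
attribute [local instance] Matrix.frobeniusNormedRing Matrix.frobeniusNormedAlgebra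

/-- The principal matrix logarithm on `Sym⁺⁺(3)`: for positive definite symmetric `B`,
`matrixLog B` is the unique symmetric matrix `X` with `exp X = B` (junk value otherwise). -/
noncomputable def matrixLog (B : M3) : M3 :=
  if h : ∃ X : M3, X.IsSymm ∧ NormedSpace.exp X = B then h.choose else 0

/-- conjugation by an orthogonal matrix, as an algebra homomorphism -/
def conjA (U : M3) (h1 : U * Uᵀ = 1) (h2 : Uᵀ * U = 1) : M3 →ₐ[ℝ] M3 where
  toFun A := U * A * Uᵀ
  map_one' := by show U * 1 * Uᵀ = 1; rw [mul_one, h1]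
  map_mul' A C := by
    calc U * (A * C) * Uᵀ = U * A * (Uᵀ * U) * C * Uᵀ := by rw [h2]; noncomm_ring
    _ = (U * A * Uᵀ) * (U * C * Uᵀ) := by noncomm_ring
  map_zero' := by simp
  map_add' A C := by noncomm_ring
  commutes' r := by
    have := Algebra.commutes (A := M3) r Uᵀ
    calc U * algebraMap ℝ M3 r * Uᵀ = algebraMap ℝ M3 r * (U * Uᵀ) := by
          rw [mul_assoc, this, ← mul_assoc, h1, one_mul, mul_one]
    _ = algebraMap ℝ M3 r := by rw [h1, mul_one]

-- spectral decomposition for real symmetric matrices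
lemma exists_orth_diag (S : M3) (hS : S.IsSymm) :
    ∃ (U : M3) (ν : Fin 3 → ℝ), U * Uᵀ = 1 ∧ Uᵀ * U = 1 ∧ S = U * Matrix.diagonal ν * Uᵀ := by
  have hH : S.IsHermitian := by
    rwa [Matrix.IsHermitian, Matrix.conjTranspose_eq_transpose_of_trivial]
  refine ⟨(hH.eigenvectorUnitary : M3), hH.eigenvalues, ?_, ?_, ?_⟩
  · have := (Matrix.mem_unitaryGroup_iff).mp hH.eigenvectorUnitary.2
    rwa [Matrix.star_eq_conjTranspose, Matrix.conjTranspose_eq_transpose_of_trivial] at this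
  · have := (Matrix.mem_unitaryGroup_iff').mp hH.eigenvectorUnitary.2
    rwa [Matrix.star_eq_conjTranspose, Matrix.conjTranspose_eq_transpose_of_trivial] at this
  · have := hH.spectral_theorem
    rwa [Unitary.conjStarAlgAut_apply, Matrix.star_eq_conjTranspose, Matrix.conjTranspose_eq_transpose_of_trivial,
      show (RCLike.ofReal ∘ hH.eigenvalues : Fin 3 → ℝ) = hH.eigenvalues from rfl] at this

lemma aeval_conj (U : M3) (h1 : U * Uᵀ = 1) (h2 : Uᵀ * U = 1) (A : M3) (p : Polynomial ℝ) :
    Polynomial.aeval (U * A * Uᵀ) p = U * (Polynomial.aeval A p) * Uᵀ :=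
  Polynomial.aeval_algHom_apply (conjA U h1 h2) A p

lemma aeval_diag (ν : Fin 3 → ℝ) (p : Polynomial ℝ) :
    Polynomial.aeval (Matrix.diagonal ν : M3) p
      = Matrix.diagonal (fun i => Polynomial.eval (ν i) p) := by
  have h := Polynomial.aeval_algHom_apply (Matrix.diagonalAlgHom (n := Fin 3) (α := ℝ) ℝ) ν p
  simp only [Matrix.diagonalAlgHom_apply] at h
  have hv : (Polynomial.aeval ν p : Fin 3 → ℝ) = fun i => Polynomial.eval (ν i) p := by
    funext i
    have h2 := Polynomial.aeval_algHom_apply (Pi.evalAlgHom ℝ (fun _ : Fin 3 => ℝ) i) ν p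
    simp only [Pi.evalAlgHom_apply] at h2
    rw [← h2, Polynomial.aeval_def, Polynomial.eval₂_eq_eval_map, Algebra.algebraMap_self, Polynomial.map_id]
  rw [h, hv]

lemma exp_orth_diag (U : M3) (h1 : U * Uᵀ = 1) (ν : Fin 3 → ℝ) :
    NormedSpace.exp (U * Matrix.diagonal ν * Uᵀ) =
      U * Matrix.diagonal (fun i => Real.exp (ν i)) * Uᵀ := by
  have hUinv : U⁻¹ = Uᵀ := Matrix.inv_eq_right_inv h1
  have hU : IsUnit U := by
    apply Matrix.isUnit_iff_isUnit_det U |>.mpr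
    exact IsUnit.of_mul_eq_one _ (by rw [← Matrix.det_mul, h1, Matrix.det_one])
  rw [← hUinv, Matrix.exp_conj U _ hU, Matrix.exp_diagonal]
  congr 2
  rw [Pi.exp_def]
  funext i
  rw [← Real.exp_eq_exp_ℝ]

lemma symm_eq_conj_diag (S : M3) (hS : S.IsSymm) :
    ∃ (U : M3) (ν : Fin 3 → ℝ), U * Uᵀ = 1 ∧ Uᵀ * U = 1 ∧ S = U * Matrix.diagonal ν * Uᵀ :=
  exists_orth_diag S hS

lemma exp_symm_injective {X Y : M3} (hX : X.IsSymm) (hY : Y.IsSymm)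
    (h : NormedSpace.exp X = NormedSpace.exp Y) : X = Y := by
  obtain ⟨U, ν, hU1, hU2, hXd⟩ := exists_orth_diag X hX
  obtain ⟨V, ρ, hV1, hV2, hYd⟩ := exists_orth_diag Y hY
  set s : Finset ℝ :=
    (Finset.univ.image fun i => Real.exp (ν i)) ∪ (Finset.univ.image fun i => Real.exp (ρ i))
  set p : Polynomial ℝ := Lagrange.interpolate s id Real.log
  have hnode : ∀ x ∈ s, Polynomial.eval x p = Real.log x := fun x hx =>
    Lagrange.eval_interpolate_at_node Real.log (Set.injOn_id _) hx
  have key : ∀ (W : M3) (w : Fin 3 → ℝ), W * Wᵀ = 1 → Wᵀ * W = 1 →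
      (∀ i, Real.exp (w i) ∈ s) →
      Polynomial.aeval (NormedSpace.exp (W * Matrix.diagonal w * Wᵀ)) p
        = W * Matrix.diagonal w * Wᵀ := by
    intro W w hW1 hW2 hmem
    rw [exp_orth_diag W hW1 w, aeval_conj W hW1 hW2, aeval_diag]
    have hw : (fun i => Polynomial.eval (Real.exp (w i)) p) = w :=
      funext fun i => by rw [hnode _ (hmem i), Real.log_exp]
    rw [hw]
  have hXs : ∀ i, Real.exp (ν i) ∈ s := fun i =>
    Finset.mem_union_left _ (Finset.mem_image_of_mem _ (Finset.mem_univ i))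
  have hYs : ∀ i, Real.exp (ρ i) ∈ s := fun i =>
    Finset.mem_union_right _ (Finset.mem_image_of_mem _ (Finset.mem_univ i))
  calc X = Polynomial.aeval (NormedSpace.exp X) p := by
        rw [hXd, key U ν hU1 hU2 hXs]
  _ = Polynomial.aeval (NormedSpace.exp Y) p := by rw [h]
  _ = Y := by rw [hYd, key V ρ hV1 hV2 hYs]

lemma matrixLog_exp (S : M3) (hS : S.IsSymm) : matrixLog (NormedSpace.exp S) = S := by
  have hex : ∃ X : M3, X.IsSymm ∧ NormedSpace.exp X = NormedSpace.exp S := ⟨S, hS, rfl⟩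
  rw [matrixLog, dif_pos hex]
  exact exp_symm_injective hex.choose_spec.1 hS hex.choose_spec.2

lemma posDef_conj_s10 {U : M3} (h1 : U * Uᵀ = 1) {A : M3} (hA : A.PosDef) :
    (U * A * Uᵀ).PosDef := by
  refine Matrix.PosDef.of_dotProduct_mulVec_pos ?_ ?_
  · have hAt : Aᵀ = A := by
      have := hA.1.eq
      rwa [Matrix.conjTranspose_eq_transpose_of_trivial] at this
    rw [Matrix.IsHermitian, Matrix.conjTranspose_eq_transpose_of_trivial]
    rw [Matrix.transpose_mul, Matrix.transpose_mul, Matrix.transpose_transpose, hAt, mul_assoc]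
  · intro x hx
    have hy : Uᵀ *ᵥ x ≠ 0 := by
      intro h0
      apply hx
      have : U *ᵥ (Uᵀ *ᵥ x) = x := by rw [Matrix.mulVec_mulVec, h1, Matrix.one_mulVec]
      rw [h0, Matrix.mulVec_zero] at this
      exact this.symm
    have hpos := hA.dotProduct_mulVec_pos hy
    have key : x ⬝ᵥ ((U * A * Uᵀ) *ᵥ x) = (Uᵀ *ᵥ x) ⬝ᵥ (A *ᵥ (Uᵀ *ᵥ x)) := by
      rw [← Matrix.mulVec_mulVec, ← Matrix.mulVec_mulVec, Matrix.dotProduct_mulVec,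
        ← Matrix.mulVec_transpose]
    simpa [star_trivial, key] using hpos

lemma posDef_exp_symm (S : M3) (hS : S.IsSymm) : (NormedSpace.exp S).PosDef := by
  obtain ⟨U, ν, h1, h2, hSd⟩ := exists_orth_diag S hS
  rw [hSd, exp_orth_diag U h1 ν]
  exact posDef_conj_s10 h1 (Matrix.PosDef.diagonal fun i => Real.exp_pos _)

lemma hasDerivAt_exp_comm (X E : M3) (hcomm : Commute X E) :
    HasDerivAt (fun t : ℝ => NormedSpace.exp (X + t • E)) (NormedSpace.exp X * E) 0 := by
  have heq : (fun t : ℝ => NormedSpace.exp (X + t • E))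
      = fun t : ℝ => NormedSpace.exp X * NormedSpace.exp (t • E) := by
    funext t
    exact NormedSpace.exp_add_of_commute (hcomm.smul_right t)
  rw [heq]
  have h := (hasDerivAt_exp_smul_const (𝕂 := ℝ) E (0 : ℝ)).const_mul (NormedSpace.exp X)
  simp only [zero_smul, NormedSpace.exp_zero, Matrix.transpose_one, one_mul, mul_one] at h
  exact h

lemma hasDerivAt_conj_curve (W C : M3) :
    HasDerivAt (fun t : ℝ => NormedSpace.exp (t • W) * C * (NormedSpace.exp (t • W))ᵀ)
      (W * C + C * Wᵀ) 0 := by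
  have h1 : HasDerivAt (fun t : ℝ => NormedSpace.exp (t • W)) W 0 := by
    have h := hasDerivAt_exp_smul_const (𝕂 := ℝ) W (0 : ℝ)
    simp only [zero_smul, NormedSpace.exp_zero, Matrix.transpose_one, one_mul, mul_one] at h
    exact h
  have h2 : HasDerivAt (fun t : ℝ => (NormedSpace.exp (t • W))ᵀ) Wᵀ 0 := by
    have heq : (fun t : ℝ => (NormedSpace.exp (t • W))ᵀ)
        = fun t : ℝ => NormedSpace.exp (t • Wᵀ) := by
      funext t
      rw [← Matrix.exp_transpose, Matrix.transpose_smul]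
    rw [heq]
    have h := hasDerivAt_exp_smul_const (𝕂 := ℝ) Wᵀ (0 : ℝ)
    simp only [zero_smul, NormedSpace.exp_zero, Matrix.transpose_one, one_mul, mul_one] at h
    exact h
  have h := (h1.mul_const C).mul h2
  simp only [zero_smul, NormedSpace.exp_zero, Matrix.transpose_one, one_mul, mul_one] at h
  exact h

lemma curve_deriv {B : M3} {L : M3 →L[ℝ] M3}
    (hL : HasFDerivWithinAt matrixLog L {X : M3 | X.PosDef} B)
    (γ : ℝ → M3) (hmem : ∀ t, (γ t).PosDef) (hγ0 : γ 0 = B) {v w : M3}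
    (hγ : HasDerivAt γ v 0) (hlog : HasDerivAt (fun t => matrixLog (γ t)) w 0) : L v = w := by
  have hL' : HasFDerivWithinAt matrixLog L {X : M3 | X.PosDef} (γ 0) := hγ0 ▸ hL
  have hcomp := hL'.comp_hasDerivWithinAt (0 : ℝ) hγ.hasDerivWithinAt
    (fun t _ => hmem t : Set.MapsTo γ Set.univ {X : M3 | X.PosDef})
  have h1 : HasDerivAt (matrixLog ∘ γ) (L v) 0 := hasDerivWithinAt_univ.mp hcomp
  exact h1.unique hlog

lemma exp_conj_antisymm {W : M3} (hW : Wᵀ = -W) (S : M3) (t : ℝ) :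
    NormedSpace.exp (NormedSpace.exp (t • W) * S * (NormedSpace.exp (t • W))ᵀ)
      = NormedSpace.exp (t • W) * NormedSpace.exp S * (NormedSpace.exp (t • W))ᵀ := by
  have ht : (NormedSpace.exp (t • W))ᵀ = (NormedSpace.exp (t • W))⁻¹ := by
    rw [← Matrix.exp_transpose, Matrix.transpose_smul, hW, smul_neg, Matrix.exp_neg]
  rw [ht]
  exact Matrix.exp_conj _ S (NormedSpace.isUnit_exp _)

lemma conj_transpose_eq (U A : M3) : (U * A * Uᵀ)ᵀ = U * Aᵀ * Uᵀ := by
  rw [Matrix.transpose_mul, Matrix.transpose_mul, Matrix.transpose_transpose, mul_assoc]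

lemma conj_isSymm (U A : M3) (hA : A.IsSymm) : (U * A * Uᵀ).IsSymm := by
  rw [Matrix.IsSymm, conj_transpose_eq, hA.eq]

lemma trace_conj {U : M3} (h2 : Uᵀ * U = 1) (A : M3) :
    Matrix.trace (U * A * Uᵀ) = Matrix.trace A := by
  rw [Matrix.trace_mul_comm, ← mul_assoc, h2, one_mul]

/-- If `L` is the Fréchet derivative at `B ∈ Sym⁺⁺(3)` of the matrix
logarithm, then there is `c > 0` with `⟨L(B D + D B), D⟩ ≥ c ‖D‖²` for all `D ∈ Sym(3)`;
in particular `⟨L(B D + D B), D⟩ > 0` for all symmetric `D ≠ 0`. -/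
theorem log_fderiv_BD_DB_positive (B : M3) (hB : B.PosDef)
    (L : M3 →L[ℝ] M3)
    (hL : HasFDerivWithinAt matrixLog L {X : M3 | X.PosDef} B) :
    (∃ c : ℝ, 0 < c ∧ ∀ D : M3, D.IsSymm →
      c * Matrix.trace (D * Dᵀ) ≤ Matrix.trace (L (B * D + D * B) * Dᵀ)) ∧
    ∀ D : M3, D.IsSymm → D ≠ 0 → 0 < Matrix.trace (L (B * D + D * B) * Dᵀ) := by
  -- spectral setup
  have hBsymm : B.IsSymm := by
    have := hB.1.eq
    rwa [Matrix.conjTranspose_eq_transpose_of_trivial] at this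
  obtain ⟨U, lam, h1, h2, hBd⟩ := exists_orth_diag B hBsymm
  have hlam : ∀ i, 0 < lam i := by
    have h1' : Uᵀ * Uᵀᵀ = 1 := by rwa [Matrix.transpose_transpose]
    have hc := posDef_conj_s10 h1' hB
    have heq : Uᵀ * B * Uᵀᵀ = Matrix.diagonal lam := by
      rw [Matrix.transpose_transpose, hBd]
      calc Uᵀ * (U * Matrix.diagonal lam * Uᵀ) * U
          = (Uᵀ * U) * Matrix.diagonal lam * (Uᵀ * U) := by noncomm_ring
        _ = Matrix.diagonal lam := by rw [h2, one_mul, mul_one]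
    rw [heq] at hc
    exact fun i => Matrix.posDef_diagonal_iff.mp hc i
  set Φ : M3 →ₐ[ℝ] M3 := conjA U h1 h2 with hΦ
  have hΦdef : ∀ A : M3, Φ A = U * A * Uᵀ := fun A => rfl
  have hΦB : Φ (Matrix.diagonal lam) = B := by rw [hΦdef, ← hBd]
  set μ : Fin 3 → ℝ := fun i => Real.log (lam i) with hμ
  set X : M3 := U * Matrix.diagonal μ * Uᵀ with hXdef
  have hΦX : Φ (Matrix.diagonal μ) = X := by rw [hΦdef, hXdef]
  have hXsymm : X.IsSymm := conj_isSymm U _ (Matrix.isSymm_diagonal μ)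
  have hexpX : NormedSpace.exp X = B := by
    rw [hXdef, exp_orth_diag U h1 μ, hBd]
    have : (fun i => Real.exp (μ i)) = lam := by
      funext i
      simp only [hμ]
      exact Real.exp_log (hlam i)
    rw [this]
  -- the coercivity constants
  set κ : Fin 3 → Fin 3 → ℝ := fun i j =>
    if lam i = lam j then 2
    else (lam i + lam j) * (Real.log (lam j) - Real.log (lam i)) / (lam j - lam i) with hκ
  have hκpos : ∀ i j, 0 < κ i j := by
    intro i j
    simp only [hκ]
    split
    · norm_num
    · next h =>
      rcases lt_or_gt_of_ne h with hlt | hgt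
      · apply div_pos
        · exact mul_pos (add_pos (hlam i) (hlam j))
            (sub_pos.mpr (Real.log_lt_log (hlam i) hlt))
        · exact sub_pos.mpr hlt
      · rw [div_pos_iff]
        right
        constructor
        · apply mul_neg_of_pos_of_neg (add_pos (hlam i) (hlam j))
          exact sub_neg.mpr (Real.log_lt_log (hlam j) hgt)
        · exact sub_neg.mpr hgt
  set c : ℝ := (Finset.univ : Finset (Fin 3 × Fin 3)).inf' Finset.univ_nonempty
      (fun p => κ p.1 p.2) with hcdef
  have hc : 0 < c := (Finset.lt_inf'_iff _).mpr fun p _ => hκpos p.1 p.2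
  have hcle : ∀ i j, c ≤ κ i j := fun i j => Finset.inf'_le _ (Finset.mem_univ (i, j))
  -- main computation for a fixed symmetric D
  have key : ∀ D : M3, D.IsSymm →
      Matrix.trace (L (B * D + D * B) * Dᵀ)
          = ∑ i, ∑ j, κ i j * ((Uᵀ * D * U) i j) ^ 2
        ∧ Matrix.trace (D * Dᵀ) = ∑ i, ∑ j, ((Uᵀ * D * U) i j) ^ 2 := by
    intro D hDsymm
    set Dt : M3 := Uᵀ * D * U with hDtdef
    have hΦDt : Φ Dt = D := by
      rw [hΦdef, hDtdef]
      calc U * (Uᵀ * D * U) * Uᵀ = (U * Uᵀ) * D * (U * Uᵀ) := by noncomm_ring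
      _ = D := by rw [h1, one_mul, mul_one]
    have hDtsymm : Dtᵀ = Dt := by
      have h := conj_transpose_eq Uᵀ D
      rw [Matrix.transpose_transpose] at h
      rw [hDtdef, h, hDsymm.eq]
    have hDtij : ∀ i j, Dt j i = Dt i j := by
      intro i j
      calc Dt j i = Dtᵀ i j := (Matrix.transpose_apply Dt i j).symm
      _ = Dt i j := by rw [hDtsymm]
    set Et : M3 := Matrix.of fun i j => if lam i = lam j then Dt i j else 0 with hEt
    set Wt : M3 := Matrix.of fun i j =>
      if lam i = lam j then 0 else ((lam i + lam j) / (lam j - lam i)) * Dt i j with hWt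
    have hEtsymm : Etᵀ = Et := by
      ext i j
      simp only [Matrix.transpose_apply, hEt, Matrix.of_apply]
      by_cases h : lam i = lam j
      · rw [if_pos h, if_pos h.symm, hDtij]
      · rw [if_neg h, if_neg (Ne.symm h)]
    have f1 : Matrix.diagonal μ * Et = Et * Matrix.diagonal μ := by
      ext i j
      rw [Matrix.diagonal_mul, Matrix.mul_diagonal]
      simp only [hEt, Matrix.of_apply]
      by_cases h : lam i = lam j
      · rw [if_pos h]
        have : μ i = μ j := by simp only [hμ, h]
        rw [this, mul_comm]
      · rw [if_neg h, mul_zero, zero_mul]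
    have f3 : Wtᵀ = -Wt := by
      ext i j
      simp only [Matrix.transpose_apply, Matrix.neg_apply, hWt, Matrix.of_apply]
      by_cases h : lam i = lam j
      · rw [if_pos h, if_pos h.symm, neg_zero]
      · rw [if_neg h, if_neg (Ne.symm h), hDtij]
        have hne : lam j - lam i ≠ 0 := sub_ne_zero.mpr (Ne.symm h)
        have hne' : lam i - lam j ≠ 0 := sub_ne_zero.mpr h
        field_simp
        ring
    have f2 : Matrix.diagonal lam * (Dt - Et) + (Dt - Et) * Matrix.diagonal lam
        = Wt * Matrix.diagonal lam - Matrix.diagonal lam * Wt := by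
      ext i j
      simp only [Matrix.add_apply, Matrix.sub_apply, Matrix.diagonal_mul, Matrix.mul_diagonal,
        hEt, hWt, Matrix.of_apply]
      by_cases h : lam i = lam j
      · rw [if_pos h, if_pos h, h]
        ring
      · rw [if_neg h, if_neg h]
        have hne : lam j - lam i ≠ 0 := sub_ne_zero.mpr (Ne.symm h)
        field_simp
        ring
    set E : M3 := Φ Et with hEdef
    set Wm : M3 := Φ Wt with hWdef
    have hcommXE : Commute X E := by
      show X * E = E * X
      rw [← hΦX, hEdef, ← _root_.map_mul Φ, ← _root_.map_mul Φ, f1]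
    have hEsymm : E.IsSymm := conj_isSymm U Et hEtsymm
    have hWanti : Wmᵀ = -Wm := by
      rw [hWdef, hΦdef, conj_transpose_eq, f3]
      rw [Matrix.mul_neg, Matrix.neg_mul]
    have hcommBE : B * E = E * B := by
      have hcB : Commute (NormedSpace.exp X) E := hcommXE.exp_left
      rw [hexpX] at hcB
      exact hcB
    -- derivative along the commuting curve
    have hsymmXtE : ∀ t : ℝ, (X + t • E).IsSymm := by
      intro t
      rw [Matrix.IsSymm, Matrix.transpose_add, Matrix.transpose_smul, hXsymm.eq, hEsymm.eq]
    have r1 : L (B * E) = E := by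
      apply curve_deriv hL (fun t : ℝ => NormedSpace.exp (X + t • E))
      · intro t
        exact posDef_exp_symm _ (hsymmXtE t)
      · rw [zero_smul, add_zero, hexpX]
      · have := hasDerivAt_exp_comm X E hcommXE
        rwa [hexpX] at this
      · have heq : (fun t : ℝ => matrixLog (NormedSpace.exp (X + t • E)))
            = fun t : ℝ => X + t • E := by
          funext t
          exact matrixLog_exp _ (hsymmXtE t)
        rw [heq]
        exact (((hasDerivAt_id (0 : ℝ)).smul_const E).const_add X).congr_deriv (one_smul _ _)
    -- derivative along the rotation curve
    have r2 : L (Wm * B + B * Wmᵀ) = Wm * X + X * Wmᵀ := by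
      apply curve_deriv hL
        (fun t : ℝ => NormedSpace.exp (t • Wm) * B * (NormedSpace.exp (t • Wm))ᵀ)
      · intro t
        rw [← hexpX, ← exp_conj_antisymm hWanti X t]
        exact posDef_exp_symm _ (conj_isSymm _ _ hXsymm)
      · rw [zero_smul, NormedSpace.exp_zero, Matrix.transpose_one, one_mul, mul_one]
      · exact hasDerivAt_conj_curve Wm B
      · have heq : (fun t : ℝ =>
              matrixLog (NormedSpace.exp (t • Wm) * B * (NormedSpace.exp (t • Wm))ᵀ))
            = fun t : ℝ => NormedSpace.exp (t • Wm) * X * (NormedSpace.exp (t • Wm))ᵀ := by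
          funext t
          rw [← hexpX, ← exp_conj_antisymm hWanti X t,
            matrixLog_exp _ (conj_isSymm _ _ hXsymm)]
        rw [heq]
        exact hasDerivAt_conj_curve Wm X
    -- combine
    have hBFF : B * (D - E) + (D - E) * B = Wm * B - B * Wm := by
      have h := congrArg Φ f2
      simp only [_root_.map_add, _root_.map_sub, _root_.map_mul] at h
      rw [hΦDt, hΦB, ← hEdef, ← hWdef] at h
      exact h
    have hsplit : B * D + D * B = (B * E + B * E) + (Wm * B + B * Wmᵀ) := by
      calc B * D + D * B = (B * (D - E) + (D - E) * B) + (B * E + E * B) := by noncomm_ring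
      _ = (Wm * B - B * Wm) + (B * E + B * E) := by rw [hBFF, ← hcommBE]
      _ = (B * E + B * E) + (Wm * B + B * Wmᵀ) := by rw [hWanti, Matrix.mul_neg]; noncomm_ring
    have hLval : L (B * D + D * B) = (E + E) + (Wm * X + X * Wmᵀ) := by
      rw [hsplit, map_add, map_add, r1, r2]
    -- express everything under Φ and take traces
    have hWXconj : Wm * X + X * Wmᵀ
        = Φ (Wt * Matrix.diagonal μ - Matrix.diagonal μ * Wt) := by
      rw [hWanti, _root_.map_sub, _root_.map_mul, _root_.map_mul, hΦX, ← hWdef, Matrix.mul_neg, sub_eq_add_neg]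
    have hGconj : L (B * D + D * B) * Dᵀ
        = Φ ((Et + Et + (Wt * Matrix.diagonal μ - Matrix.diagonal μ * Wt)) * Dt) := by
      rw [hLval, hDsymm.eq, hWXconj, hEdef, ← hΦDt, ← _root_.map_add Φ, ← _root_.map_add Φ, ← _root_.map_mul Φ]
    have hGt_entry : ∀ i j,
        (Et + Et + (Wt * Matrix.diagonal μ - Matrix.diagonal μ * Wt)) i j
          = κ i j * Dt i j := by
      intro i j
      simp only [Matrix.add_apply, Matrix.sub_apply, Matrix.mul_diagonal, Matrix.diagonal_mul,
        hEt, hWt, hκ, Matrix.of_apply]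
      by_cases h : lam i = lam j
      · rw [if_pos h, if_pos h, if_pos h]
        ring
      · rw [if_neg h, if_neg h, if_neg h]
        have hne : lam j - lam i ≠ 0 := sub_ne_zero.mpr (Ne.symm h)
        simp only [hμ]
        field_simp
        ring
    constructor
    · rw [hGconj, hΦdef, trace_conj h2, Matrix.trace]
      simp only [Matrix.diag_apply, Matrix.mul_apply]
      apply Finset.sum_congr rfl
      intro i _
      apply Finset.sum_congr rfl
      intro j _
      rw [hGt_entry i j, hDtij i j]
      ring
    · have : D * Dᵀ = Φ (Dt * Dt) := by
        rw [hDsymm.eq, ← hΦDt, ← _root_.map_mul Φ]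
      rw [this, hΦdef, trace_conj h2, Matrix.trace]
      simp only [Matrix.diag_apply, Matrix.mul_apply]
      apply Finset.sum_congr rfl
      intro i _
      apply Finset.sum_congr rfl
      intro j _
      rw [hDtij i j]
      ring
  -- concluding
  have hmain : ∀ D : M3, D.IsSymm →
      c * Matrix.trace (D * Dᵀ) ≤ Matrix.trace (L (B * D + D * B) * Dᵀ) := by
    intro D hDsymm
    obtain ⟨k1, k2⟩ := key D hDsymm
    rw [k1, k2, Finset.mul_sum]
    apply Finset.sum_le_sum
    intro i _
    rw [Finset.mul_sum]
    apply Finset.sum_le_sum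
    intro j _
    exact mul_le_mul_of_nonneg_right (hcle i j) (sq_nonneg _)
  refine ⟨⟨c, hc, hmain⟩, ?_⟩
  intro D hDsymm hDne
  have htrpos : 0 < Matrix.trace (D * Dᵀ) := by
    have : Matrix.trace (D * Dᵀ) = ∑ i, ∑ j, (D i j) ^ 2 := by
      rw [Matrix.trace]
      simp only [Matrix.diag_apply, Matrix.mul_apply, Matrix.transpose_apply]
      apply Finset.sum_congr rfl
      intro i _
      apply Finset.sum_congr rfl
      intro j _
      ring
    rw [this]
    obtain ⟨i, hi⟩ := Function.ne_iff.mp hDne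
    obtain ⟨j, hj⟩ := Function.ne_iff.mp hi
    have hij : (0 : ℝ) < (D i j) ^ 2 := by
      rcases (sq_nonneg (D i j)).lt_or_eq with h | h
      · exact h
      · exact absurd (pow_eq_zero_iff two_ne_zero |>.mp h.symm) hj
    calc (0 : ℝ) < ∑ j, (D i j) ^ 2 :=
          Finset.sum_pos' (fun k _ => sq_nonneg _) ⟨j, Finset.mem_univ j, hij⟩
    _ ≤ ∑ i, ∑ j, (D i j) ^ 2 := by
        apply Finset.single_le_sum (f := fun i => ∑ j, (D i j) ^ 2)
          (fun k _ => Finset.sum_nonneg fun l _ => sq_nonneg _) (Finset.mem_univ i)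
  calc (0 : ℝ) < c * Matrix.trace (D * Dᵀ) := mul_pos hc htrpos
  _ ≤ Matrix.trace (L (B * D + D * B) * Dᵀ) := hmain D hDsymm
end
end

section
/- Let B ∈ Sym⁺⁺(3) and let L : Sym(3) → Sym(3) be the Fréchet derivative at B of the matrix logarithm log : Sym⁺⁺(3) → Sym(3). Then for every D ∈ Sym(3) one has tr(L(B D + D B)) = 2 tr(D), even though L(B D + D B) ≠ 2 D in general. -/
open Matrix

noncomputable section

open scoped Classical

attribute [local instance] Matrix.frobeniusNormedAddCommGroup Matrix.frobeniusNormedSpace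

lemma isSymm_iff_isHermitian' (A : M3) : A.IsSymm ↔ A.IsHermitian := by
  rw [Matrix.IsHermitian, Matrix.IsSymm, Matrix.conjTranspose_eq_transpose_of_trivial]

lemma exists_symm_exp' {M : M3} (hM : M.PosDef) :
    ∃ X : M3, X.IsSymm ∧ NormedSpace.exp X = M := by
  have hH := hM.1
  set U : M3 := (hH.eigenvectorUnitary : M3) with hUdef
  have hUU : U * star U = 1 := (Matrix.mem_unitaryGroup_iff).mp hH.eigenvectorUnitary.2
  have hUU' : star U * U = 1 := (Matrix.mem_unitaryGroup_iff').mp hH.eigenvectorUnitary.2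
  have hUunit : IsUnit U := ⟨⟨U, star U, hUU, hUU'⟩, rfl⟩
  have hUinv : U⁻¹ = star U := Matrix.inv_eq_right_inv hUU
  have hstar : star U = Uᵀ := by
    rw [Matrix.star_eq_conjTranspose, Matrix.conjTranspose_eq_transpose_of_trivial]
  refine ⟨U * Matrix.diagonal (fun i => Real.log (hH.eigenvalues i)) * U⁻¹, ?_, ?_⟩
  · rw [Matrix.IsSymm, hUinv, hstar]
    simp [Matrix.transpose_mul, Matrix.diagonal_transpose, mul_assoc]
  · rw [Matrix.exp_conj U _ hUunit, Matrix.exp_diagonal]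
    have hexp : (NormedSpace.exp fun i => Real.log (hH.eigenvalues i))
        = fun i => hH.eigenvalues i := by
      funext i
      rw [Pi.coe_exp, ← Real.exp_eq_exp_ℝ, Real.exp_log (hM.eigenvalues_pos i)]
    rw [hexp, hUinv]
    conv_rhs => rw [hH.spectral_theorem]
    norm_num
    rfl

lemma det_exp_symm' {X : M3} (hX : X.IsSymm) :
    Matrix.det (NormedSpace.exp X) = Real.exp (Matrix.trace X) := by
  have hH : X.IsHermitian := (isSymm_iff_isHermitian' X).1 hX
  set U : M3 := (hH.eigenvectorUnitary : M3) with hUdef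
  have hUU : U * star U = 1 := (Matrix.mem_unitaryGroup_iff).mp hH.eigenvectorUnitary.2
  have hUU' : star U * U = 1 := (Matrix.mem_unitaryGroup_iff').mp hH.eigenvectorUnitary.2
  have hUunit : IsUnit U := ⟨⟨U, star U, hUU, hUU'⟩, rfl⟩
  have hUinv : U⁻¹ = star U := Matrix.inv_eq_right_inv hUU
  have hspec : X = U * Matrix.diagonal (fun i => hH.eigenvalues i) * star U := by
    conv_lhs => rw [hH.spectral_theorem]
    norm_num
    rfl
  have htr : Matrix.trace X = ∑ i, hH.eigenvalues i := by
    conv_lhs => rw [hspec]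
    rw [Matrix.trace_mul_cycle, hUU', one_mul, Matrix.trace_diagonal]
  have hdet : Matrix.det (NormedSpace.exp X) = ∏ i, Real.exp (hH.eigenvalues i) := by
    conv_lhs => rw [hspec, ← hUinv]
    rw [Matrix.exp_conj U _ hUunit, Matrix.exp_diagonal, hUinv]
    have hexp : (NormedSpace.exp fun i => hH.eigenvalues i)
        = fun i => Real.exp (hH.eigenvalues i) := by
      funext i; rw [Pi.coe_exp, ← Real.exp_eq_exp_ℝ]
    rw [hexp, Matrix.det_mul_right_comm, hUU, one_mul, Matrix.det_diagonal]
  rw [hdet, htr, Real.exp_sum]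

lemma trace_matrixLog' {M : M3} (hM : M.PosDef) :
    Matrix.trace (matrixLog M) = Real.log (Matrix.det M) := by
  have hex := exists_symm_exp' hM
  unfold matrixLog
  rw [dif_pos hex]
  obtain ⟨hs, he⟩ := hex.choose_spec
  have h2 := det_exp_symm' hs
  rw [he] at h2
  rw [h2, Real.log_exp]

lemma posdef_line' {B H : M3} (hB : B.PosDef) (hH : H.IsHermitian) :
    ∃ ε > 0, ∀ t : ℝ, |t| < ε → (B + t • H).PosDef := by
  classical
  set S := Metric.sphere (0 : Fin 3 → ℝ) 1 with hS
  have hScomp : IsCompact S := isCompact_sphere _ _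
  have hSne : S.Nonempty := NormedSpace.sphere_nonempty.mpr zero_le_one
  have hfc : Continuous fun x : Fin 3 → ℝ => x ⬝ᵥ (B *ᵥ x) :=
    continuous_id.dotProduct (continuous_const.matrix_mulVec continuous_id)
  have hgc : Continuous fun x : Fin 3 → ℝ => |x ⬝ᵥ (H *ᵥ x)| :=
    (continuous_id.dotProduct (continuous_const.matrix_mulVec continuous_id)).abs
  obtain ⟨x₀, hx₀S, hx₀min⟩ := hScomp.exists_isMinOn hSne hfc.continuousOn
  obtain ⟨y₀, hy₀S, hy₀max⟩ := hScomp.exists_isMaxOn hSne hgc.continuousOn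
  set c := x₀ ⬝ᵥ (B *ᵥ x₀) with hc_def
  set Mb := |y₀ ⬝ᵥ (H *ᵥ y₀)| with hMb_def
  have hx₀ne : x₀ ≠ 0 := by
    intro h
    have := mem_sphere_zero_iff_norm.mp hx₀S
    rw [h, norm_zero] at this
    norm_num at this
  have hc : 0 < c := by
    have h := hB.dotProduct_mulVec_pos hx₀ne
    rwa [star_trivial] at h
  have hMb0 : 0 ≤ Mb := abs_nonneg _
  refine ⟨c / (Mb + 1), by positivity, fun t ht => ?_⟩
  refine Matrix.PosDef.of_dotProduct_mulVec_pos ?_ ?_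
  · have : (t • H).IsHermitian := by
      rw [Matrix.IsHermitian, Matrix.conjTranspose_smul, hH.eq, star_trivial]
    exact hB.1.add this
  · intro x hx
    have hxn : (0:ℝ) < ‖x‖ := norm_pos_iff.mpr hx
    set u := ‖x‖⁻¹ • x with hu_def
    have huS : u ∈ S := by
      rw [hS, mem_sphere_zero_iff_norm, hu_def, norm_smul, norm_inv, norm_norm]
      field_simp
    have hfu : c ≤ u ⬝ᵥ (B *ᵥ u) := hx₀min huS
    have hgu : |u ⬝ᵥ (H *ᵥ u)| ≤ Mb := hy₀max huS
    have hsum : u ⬝ᵥ ((B + t • H) *ᵥ u) = u ⬝ᵥ (B *ᵥ u) + t * (u ⬝ᵥ (H *ᵥ u)) := by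
      rw [Matrix.add_mulVec, Matrix.smul_mulVec, dotProduct_add, dotProduct_smul,
        smul_eq_mul]
    have h1 : -(|t| * |u ⬝ᵥ (H *ᵥ u)|) ≤ t * (u ⬝ᵥ (H *ᵥ u)) := by
      rw [← abs_mul]; exact neg_abs_le _
    have h2 : |t| * |u ⬝ᵥ (H *ᵥ u)| ≤ |t| * Mb :=
      mul_le_mul_of_nonneg_left hgu (abs_nonneg t)
    have h3 : |t| * Mb < c := by
      calc |t| * Mb ≤ |t| * (Mb + 1) := by
            apply mul_le_mul_of_nonneg_left (by linarith) (abs_nonneg t)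
        _ < c := (lt_div_iff₀ (by positivity)).mp ht
    have hupos : 0 < u ⬝ᵥ ((B + t • H) *ᵥ u) := by
      rw [hsum]; linarith
    have hscale : x ⬝ᵥ ((B + t • H) *ᵥ x) = ‖x‖ * (‖x‖ * (u ⬝ᵥ ((B + t • H) *ᵥ u))) := by
      have hx_eq : x = ‖x‖ • u := by
        rw [hu_def, smul_smul, mul_inv_cancel₀ (ne_of_gt hxn), one_smul]
      conv_lhs => rw [hx_eq]
      rw [Matrix.mulVec_smul, smul_dotProduct, dotProduct_smul, smul_eq_mul,
        smul_eq_mul]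
    have hpos : 0 < x ⬝ᵥ ((B + t • H) *ᵥ x) := by
      rw [hscale]; positivity
    simpa using hpos

/-- If `L` is the Fréchet derivative at `B ∈ Sym⁺⁺(3)` of the matrix
logarithm, then `tr(L(B D + D B)) = 2 tr(D)` for every `D ∈ Sym(3)`. -/
theorem log_fderiv_BD_DB_trace (B : M3) (hB : B.PosDef)
    (L : M3 →L[ℝ] M3)
    (hL : HasFDerivWithinAt matrixLog L {X : M3 | X.PosDef} B) :
    ∀ D : M3, D.IsSymm →
      Matrix.trace (L (B * D + D * B)) = 2 * Matrix.trace D := by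
  intro D hD
  have hBsymm : B.IsSymm := (isSymm_iff_isHermitian' B).2 hB.1
  have hDt : Dᵀ = D := hD
  have hBt : Bᵀ = B := hBsymm
  set H : M3 := B * D + D * B with hHdef
  have hHsymm : H.IsSymm := by
    show Hᵀ = H
    rw [hHdef, Matrix.transpose_add, Matrix.transpose_mul, Matrix.transpose_mul, hDt, hBt,
      add_comm]
  have hHher : H.IsHermitian := (isSymm_iff_isHermitian' H).1 hHsymm
  obtain ⟨ε, hε, hline⟩ := posdef_line' hB hHher
  set s : Set ℝ := {t : ℝ | (B + t • H).PosDef} with hsdef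
  have hs_mem : s ∈ nhds (0:ℝ) := by
    refine Filter.mem_of_superset (Metric.ball_mem_nhds 0 hε) fun t ht => ?_
    rw [Metric.mem_ball, Real.dist_eq, sub_zero] at ht
    exact hline t ht
  have hγ : HasDerivWithinAt (fun t : ℝ => B + t • H) H s 0 := by
    have h := (((hasDerivAt_id (0:ℝ)).smul_const H).const_add B).hasDerivWithinAt (s := s)
    simp only [id, one_smul] at h
    exact h
  have hlog : HasDerivWithinAt (fun t : ℝ => matrixLog (B + t • H)) (L H) s 0 := by
    have hmaps : Set.MapsTo (fun t : ℝ => B + t • H) s {X : M3 | X.PosDef} := fun t ht => ht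
    have hL' : HasFDerivWithinAt matrixLog L {X : M3 | X.PosDef}
        ((fun t : ℝ => B + t • H) 0) := by simpa using hL
    have := hL'.comp_hasDerivWithinAt 0 hγ hmaps
    exact this
  set T : M3 →L[ℝ] ℝ := LinearMap.toContinuousLinearMap (Matrix.traceLinearMap (Fin 3) ℝ ℝ)
    with hT
  have hTapp : ∀ A : M3, T A = Matrix.trace A := fun A => rfl
  have h1 : HasDerivWithinAt (fun t : ℝ => T (matrixLog (B + t • H))) (T (L H)) s 0 := by
    have := (T.hasFDerivAt).comp_hasDerivWithinAt 0 hlog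
    exact this
  have hBdet : IsUnit B.det := isUnit_iff_ne_zero.mpr (ne_of_gt hB.det_pos)
  set A : M3 := B⁻¹ * H with hA
  set P : Polynomial ℝ :=
    Matrix.det (1 + (Polynomial.X : Polynomial ℝ) • A.map Polynomial.C) with hP
  have hPeval : ∀ t : ℝ, P.eval t = Matrix.det (1 + t • A) := by
    intro t
    have hmap : (1 + (Polynomial.X : Polynomial ℝ) • A.map Polynomial.C).map
        (Polynomial.evalRingHom t) = 1 + t • A := by
      ext i j
      simp only [Matrix.map_apply, Matrix.add_apply, Matrix.smul_apply, Matrix.one_apply,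
        smul_eq_mul, Polynomial.coe_evalRingHom, Polynomial.eval_add, Polynomial.eval_mul,
        Polynomial.eval_X, Polynomial.eval_C, apply_ite (Polynomial.eval t),
        Polynomial.eval_one, Polynomial.eval_zero]
    rw [← hmap, ← RingHom.mapMatrix_apply, ← RingHom.map_det]
    simp [hP]
  have hP0 : P.eval 0 = 1 := by rw [hPeval]; simp
  have hPd : HasDerivAt (fun t : ℝ => P.eval t) (Matrix.trace A) 0 := by
    have h := P.hasDerivAt (0:ℝ)
    rwa [hP, Matrix.derivative_det_one_add_X_smul] at h
  set F : ℝ → ℝ := fun t => Real.log B.det + Real.log (P.eval t) with hF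
  have hFd : HasDerivAt F (Matrix.trace A) 0 := by
    have hlog' := hPd.log (by rw [hP0]; norm_num)
    have := hlog'.const_add (Real.log B.det)
    simpa [hF, hP0] using this
  have hBmul : ∀ t : ℝ, B + t • H = B * (1 + t • A) := by
    intro t
    rw [Matrix.mul_add, mul_one, mul_smul_comm, hA, ← Matrix.mul_assoc,
      Matrix.mul_nonsing_inv B hBdet, Matrix.one_mul]
  have hPpos : ∀ t ∈ s, 0 < P.eval t := by
    intro t ht
    have hpd : (B + t • H).PosDef := ht
    have hdp := hpd.det_pos
    rw [hBmul t, Matrix.det_mul, ← hPeval t] at hdp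
    nlinarith [hB.det_pos]
  have hcongr : ∀ t ∈ s, F t = T (matrixLog (B + t • H)) := by
    intro t ht
    have hpd : (B + t • H).PosDef := ht
    rw [hTapp, trace_matrixLog' hpd, hBmul t, Matrix.det_mul, ← hPeval t,
      Real.log_mul (ne_of_gt hB.det_pos) (ne_of_gt (hPpos t ht)), hF]
  have h0s : (0:ℝ) ∈ s := by
    show (B + (0:ℝ) • H).PosDef
    simpa using hB
  have h1' : HasDerivWithinAt F (T (L H)) s 0 := h1.congr hcongr (hcongr 0 h0s)
  have hud : UniqueDiffWithinAt ℝ s 0 := uniqueDiffWithinAt_of_mem_nhds hs_mem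
  have hkey : T (L H) = Matrix.trace A := hud.eq_deriv s h1' hFd.hasDerivWithinAt
  have htrA : Matrix.trace A = 2 * Matrix.trace D := by
    rw [hA, hHdef, Matrix.mul_add, ← Matrix.mul_assoc, Matrix.nonsing_inv_mul B hBdet,
      Matrix.one_mul, Matrix.trace_add, ← Matrix.mul_assoc, Matrix.trace_mul_cycle B⁻¹ D B,
      Matrix.mul_nonsing_inv B hBdet, Matrix.one_mul, two_mul]
  calc Matrix.trace (L (B * D + D * B)) = T (L H) := by rw [hTapp, hHdef]
    _ = 2 * Matrix.trace D := by rw [hkey, htrA]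
end
end

section
/- The exponentiated Hencky stress is Hilbert-monotone: fix μ > 0 and k ∈ ℝ, and define σ̂ : Sym(3) → Sym(3) by σ̂(X) = 2 μ exp(k ‖X‖²) exp(−tr X) X (scalar exponentials). If k ≥ 3/8 then ⟨σ̂(X₁) − σ̂(X₂), X₁ − X₂⟩ ≥ 0 for all X₁, X₂ ∈ Sym(3); if k > 3/8 then ⟨σ̂(X₁) − σ̂(X₂), X₁ − X₂⟩ > 0 for all X₁ ≠ X₂ in Sym(3). -/
open Matrix

noncomputable section

/-- The Cauchy stress of the exponentiated Hencky energy: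
`σ̂(X) = 2 μ e^{k ‖X‖²} e^{−tr X} X`, with `‖X‖² = tr(X Xᵀ)`. -/
noncomputable def expHenckyStress (μ k : ℝ) (X : M3) : M3 :=
  (2 * μ * Real.exp (k * Matrix.trace (X * Xᵀ)) * Real.exp (-Matrix.trace X)) • X

/-- The auxiliary scalar function `ψ(t) = ⟨σ̂(X₂ + tD), D⟩` expressed through scalar data. -/
noncomputable def psiEH (μ k b c d t2 τ : ℝ) : ℝ → ℝ :=
  fun t => 2*μ*Real.exp (k*(b + 2*c*t + d*t^2) - (t2 + τ*t)) * (c + d*t)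

lemma psiEH_hasDerivAt (μ k b c d t2 τ t : ℝ) :
    HasDerivAt (psiEH μ k b c d t2 τ)
      (2*μ*Real.exp (k*(b + 2*c*t + d*t^2) - (t2 + τ*t)) *
        ((2*k*(c + d*t) - τ)*(c + d*t) + d)) t := by
  have hg : HasDerivAt (fun t : ℝ => k*(b + 2*c*t + d*t^2) - (t2 + τ*t))
      (2*k*(c + d*t) - τ) t := by
    have := (((((hasDerivAt_id t).const_mul (2*c)).add
      ((hasDerivAt_pow 2 t).const_mul d)).const_add b).const_mul k).sub
      (((hasDerivAt_id t).const_mul τ).const_add t2)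
    convert this using 1
    · rfl
    · rfl
    · funext y; simp only [id_eq, Pi.sub_apply, Pi.add_apply]; ring
    · ring
  have hh : HasDerivAt (fun t : ℝ => c + d*t) d t := by
    simpa using ((hasDerivAt_id t).const_mul d).const_add c
  have := ((hg.exp.mul hh).const_mul (2*μ))
  convert this using 1
  · rfl
  · rfl
  · funext y; simp only [psiEH, Pi.mul_apply]; ring
  · ring

lemma psiEH_key (μ k b c d t2 τ : ℝ) (hμ : 0 < μ) (hk : 3/8 ≤ k) (hd : 0 ≤ d)
    (hτ : τ^2 ≤ 3*d) :
    2*μ*Real.exp (k*b - t2) * c ≤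
      2*μ*Real.exp (k*(b + 2*c + d) - (t2 + τ)) * (c + d) := by
  have hmono : Monotone (psiEH μ k b c d t2 τ) := by
    apply monotone_of_deriv_nonneg
    · exact fun x => (psiEH_hasDerivAt μ k b c d t2 τ x).differentiableAt
    · intro x
      rw [(psiEH_hasDerivAt μ k b c d t2 τ x).deriv]
      have hE : 0 ≤ (2*k*(c + d*x) - τ)*(c + d*x) + d := by
        nlinarith [sq_nonneg (4*k*(c + d*x) - τ), sq_nonneg (c + d*x),
          mul_nonneg hd (by linarith : (0:ℝ) ≤ 8*k - 3)]
      positivity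
  have h01 := hmono (by norm_num : (0:ℝ) ≤ 1)
  simp only [psiEH] at h01
  norm_num at h01
  convert h01 using 4 <;> ring

lemma psiEH_key_lt (μ k b c d t2 τ : ℝ) (hμ : 0 < μ) (hk : 3/8 < k) (hd : 0 < d)
    (hτ : τ^2 ≤ 3*d) :
    2*μ*Real.exp (k*b - t2) * c <
      2*μ*Real.exp (k*(b + 2*c + d) - (t2 + τ)) * (c + d) := by
  have hmono : StrictMono (psiEH μ k b c d t2 τ) := by
    apply strictMono_of_deriv_pos
    intro x
    rw [(psiEH_hasDerivAt μ k b c d t2 τ x).deriv]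
    have hE : 0 < (2*k*(c + d*x) - τ)*(c + d*x) + d := by
      nlinarith [sq_nonneg (4*k*(c + d*x) - τ), sq_nonneg (c + d*x)]
    positivity
  have h01 := hmono (by norm_num : (0:ℝ) < 1)
  simp only [psiEH] at h01
  norm_num at h01
  convert h01 using 4 <;> ring

lemma trace_mulT_comm (A B : M3) : trace (A * Bᵀ) = trace (B * Aᵀ) := by
  rw [← Matrix.trace_transpose (A * Bᵀ), Matrix.transpose_mul, Matrix.transpose_transpose]

lemma trace_mulT_self (D : M3) : trace (D * Dᵀ) = ∑ i, ∑ j, (D i j)^2 := by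
  simp [Matrix.trace, Matrix.diag, Matrix.mul_apply, sq]

lemma trace_sq_le (D : M3) : (trace D)^2 ≤ 3 * trace (D * Dᵀ) := by
  rw [trace_mulT_self]
  simp only [Matrix.trace, Matrix.diag, Fin.sum_univ_three]
  nlinarith [sq_nonneg (D 0 0 - D 1 1), sq_nonneg (D 0 0 - D 2 2), sq_nonneg (D 1 1 - D 2 2),
    sq_nonneg (D 0 1), sq_nonneg (D 0 2), sq_nonneg (D 1 0), sq_nonneg (D 1 2),
    sq_nonneg (D 2 0), sq_nonneg (D 2 1)]

lemma trace_mulT_self_nonneg (D : M3) : 0 ≤ trace (D * Dᵀ) := by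
  rw [trace_mulT_self]
  positivity

lemma trace_mulT_self_pos (D : M3) (hD : D ≠ 0) : 0 < trace (D * Dᵀ) := by
  rcases (trace_mulT_self_nonneg D).lt_or_eq with h | h
  · exact h
  · exfalso; apply hD
    rw [trace_mulT_self] at h
    ext i j
    have h1 : ∀ i ∈ Finset.univ, (0:ℝ) ≤ ∑ j, (D i j)^2 := fun i _ => by positivity
    have h2 := (Finset.sum_eq_zero_iff_of_nonneg h1).1 h.symm i (Finset.mem_univ i)
    have h3 := (Finset.sum_eq_zero_iff_of_nonneg (fun j _ => sq_nonneg (D i j))).1 h2 j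
      (Finset.mem_univ j)
    simpa [pow_eq_zero_iff] using h3

lemma trace_formula (μ k : ℝ) (X₁ X₂ : M3) :
    Matrix.trace ((expHenckyStress μ k X₁ - expHenckyStress μ k X₂) * (X₁ - X₂)ᵀ)
    = 2*μ*Real.exp (k*(trace (X₂*X₂ᵀ) + 2*trace (X₂*(X₁-X₂)ᵀ) + trace ((X₁-X₂)*(X₁-X₂)ᵀ))
          - (trace X₂ + trace (X₁-X₂)))
        * (trace (X₂*(X₁-X₂)ᵀ) + trace ((X₁-X₂)*(X₁-X₂)ᵀ))
      - 2*μ*Real.exp (k*trace (X₂*X₂ᵀ) - trace X₂) * trace (X₂*(X₁-X₂)ᵀ) := by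
  set D := X₁ - X₂ with hD
  have hX : X₁ = X₂ + D := by rw [hD]; abel
  have emul : ∀ a bb : ℝ, 2*μ*Real.exp a * Real.exp (-bb) = 2*μ*Real.exp (a - bb) := by
    intro a bb; rw [mul_assoc, ← Real.exp_add, ← sub_eq_add_neg]
  have e1 : trace ((expHenckyStress μ k X₁ - expHenckyStress μ k X₂) * Dᵀ)
      = 2*μ*Real.exp (k*trace (X₁*X₁ᵀ) - trace X₁) * trace (X₁*Dᵀ)
        - 2*μ*Real.exp (k*trace (X₂*X₂ᵀ) - trace X₂) * trace (X₂*Dᵀ) := by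
    simp only [expHenckyStress, Matrix.sub_mul, Matrix.smul_mul, Matrix.trace_sub,
      Matrix.trace_smul, smul_eq_mul, emul]
  rw [e1]
  have e2 : trace (X₁*X₁ᵀ) = trace (X₂*X₂ᵀ) + 2*trace (X₂*Dᵀ) + trace (D*Dᵀ) := by
    rw [hX, Matrix.transpose_add, Matrix.add_mul, Matrix.mul_add, Matrix.mul_add,
      Matrix.trace_add, Matrix.trace_add, Matrix.trace_add, trace_mulT_comm D X₂]
    ring
  have e3 : trace X₁ = trace X₂ + trace D := by rw [hX, Matrix.trace_add]
  have e4 : trace (X₁*Dᵀ) = trace (X₂*Dᵀ) + trace (D*Dᵀ) := by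
    rw [hX, Matrix.add_mul, Matrix.trace_add]
  rw [e2, e3, e4]

/-- For `μ > 0`, the exponentiated Hencky stress
`σ̂(X) = 2 μ e^{k‖X‖²} e^{−tr X} X` is Hilbert-monotone on `Sym(3)` if `k ≥ 3/8`, and
strictly Hilbert-monotone if `k > 3/8`. -/
theorem expHencky_monotone (μ k : ℝ) (hμ : 0 < μ) :
    (3 / 8 ≤ k → ∀ X₁ X₂ : M3, X₁.IsSymm → X₂.IsSymm →
      0 ≤ Matrix.trace ((expHenckyStress μ k X₁ - expHenckyStress μ k X₂) *
            (X₁ - X₂)ᵀ)) ∧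
    (3 / 8 < k → ∀ X₁ X₂ : M3, X₁.IsSymm → X₂.IsSymm → X₁ ≠ X₂ →
      0 < Matrix.trace ((expHenckyStress μ k X₁ - expHenckyStress μ k X₂) *
            (X₁ - X₂)ᵀ)) := by
  constructor
  · intro hk X₁ X₂ _ _
    rw [trace_formula, sub_nonneg]
    exact psiEH_key μ k _ _ _ _ _ hμ hk (trace_mulT_self_nonneg _) (trace_sq_le _)
  · intro hk X₁ X₂ _ _ hne
    rw [trace_formula, sub_pos]
    exact psiEH_key_lt μ k _ _ _ _ _ hμ hk
      (trace_mulT_self_pos _ (sub_ne_zero.2 hne)) (trace_sq_le _)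
end
end
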